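/- arXiv:2208.10416 — 5 statements merged into one kernel-verified Lean document; each statement's English description precedes it below -/
import Mathlib

section
/- Let (X, μ) be a probability space and let ξ : X → ℝ be a measurable, μ-integrable random variable with mean μ̄ := ∫ξ dμ ≥ 0. Assume there are constants B > 0 and c > 0 such that |ξ − μ̄| ≤ B μ-almost surely and ∫ξ² dμ ≤ c·∫ξ dμ. Then for every ε > 0, every γ with 0 < γ ≤ 1, and every integer m ≥ 1, the m-fold product measure μ^{⊗m} of the set { z = (z₁,…,z_m) ∈ X^m : (μ̄ − (1/m)·Σ_{i=1}^m ξ(z_i)) / √(μ̄ + ε) > γ·√ε } is at most exp(−3γ²mε/(6c + 2B)). -/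
open MeasureTheory

lemma real_exp_tsum (x : ℝ) : Real.exp x = ∑' n : ℕ, x ^ n / Nat.factorial n := by
  rw [Real.exp_eq_exp_ℝ, NormedSpace.exp_eq_tsum_div]

lemma exp_sub_one_sub (x : ℝ) :
    Real.exp x - 1 - x = ∑' n : ℕ, x ^ (n + 2) / Nat.factorial (n + 2) := by
  have hs := Real.summable_pow_div_factorial x
  have h := Summable.sum_add_tsum_nat_add 2 hs
  rw [real_exp_tsum x, ← h]
  simp [Finset.sum_range_succ]
  ring

lemma fact_ge (k : ℕ) : 2 * 3 ^ k ≤ Nat.factorial (k + 2) := by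
  induction k with
  | zero => simp [Nat.factorial]
  | succ n ih =>
    have : Nat.factorial (n + 3) = (n + 3) * Nat.factorial (n + 2) := rfl
    calc 2 * 3 ^ (n+1) = 3 * (2 * 3 ^ n) := by ring
    _ ≤ 3 * Nat.factorial (n + 2) := by omega
    _ ≤ (n + 3) * Nat.factorial (n + 2) :=
        Nat.mul_le_mul_right _ (by omega)
    _ = Nat.factorial (n + 3) := this.symm

lemma aux2 {x : ℝ} (hx0 : 0 ≤ x) (hx3 : x < 3) :
    Real.exp x - 1 - x ≤ x ^ 2 / (2 * (1 - x / 3)) := by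
  rw [exp_sub_one_sub]
  have hr0 : 0 ≤ x / 3 := by linarith
  have hr1 : x / 3 < 1 := by linarith
  have hgeo : Summable (fun n : ℕ => (x / 3) ^ n) := summable_geometric_of_lt_one hr0 hr1
  have hsum2 : Summable (fun n : ℕ => x ^ 2 / 2 * (x / 3) ^ n) := hgeo.mul_left _
  have hs : Summable (fun n : ℕ => x ^ (n + 2) / Nat.factorial (n + 2)) :=
    (Real.summable_pow_div_factorial x).comp_injective (add_left_injective 2)
  have hterm : ∀ n : ℕ, x ^ (n + 2) / Nat.factorial (n + 2) ≤ x ^ 2 / 2 * (x / 3) ^ n := by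
    intro n
    have h1 : (2 * 3 ^ n : ℝ) ≤ Nat.factorial (n + 2) := by exact_mod_cast fact_ge n
    have h2 : (0:ℝ) < 2 * 3 ^ n := by positivity
    have h3 : (0:ℝ) < (Nat.factorial (n + 2) : ℝ) := by exact_mod_cast Nat.factorial_pos _
    have hx : 0 ≤ x ^ (n + 2) := by positivity
    calc x ^ (n + 2) / Nat.factorial (n + 2) ≤ x ^ (n + 2) / (2 * 3 ^ n) := by
          apply div_le_div_of_nonneg_left hx h2 h1
      _ = x ^ 2 / 2 * (x / 3) ^ n := by
          rw [pow_add, div_pow]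
          ring
  calc (∑' n : ℕ, x ^ (n + 2) / Nat.factorial (n + 2)) ≤ ∑' n : ℕ, x ^ 2 / 2 * (x / 3) ^ n :=
        Summable.tsum_le_tsum hterm hs hsum2
    _ = x ^ 2 / 2 * (1 - x / 3)⁻¹ := by rw [tsum_mul_left, tsum_geometric_of_lt_one hr0 hr1]
    _ = x ^ 2 / (2 * (1 - x / 3)) := by
        rw [div_mul_eq_mul_div, mul_comm, ← div_div]
        ring_nf

lemma aux1 {B lam y : ℝ} (hB : 0 < B) (hlam : 0 ≤ lam) (hy : |y| ≤ B) :
    Real.exp (lam * y) ≤ 1 + lam * y + y ^ 2 / B ^ 2 * (Real.exp (lam * B) - 1 - lam * B) := by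
  rw [exp_sub_one_sub]
  have key : Real.exp (lam * y) - 1 - lam * y ≤
      y ^ 2 / B ^ 2 * ∑' n : ℕ, (lam * B) ^ (n + 2) / Nat.factorial (n + 2) := by
    rw [exp_sub_one_sub, ← tsum_mul_left]
    have hsl : Summable (fun n : ℕ => (lam * y) ^ (n + 2) / Nat.factorial (n + 2)) :=
      (Real.summable_pow_div_factorial _).comp_injective (add_left_injective 2)
    have hsr : Summable (fun n : ℕ => y ^ 2 / B ^ 2 * ((lam * B) ^ (n + 2) / Nat.factorial (n + 2))) :=
      ((Real.summable_pow_div_factorial _).comp_injective (add_left_injective 2)).mul_left _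
    apply Summable.tsum_le_tsum _ hsl hsr
    intro n
    have h3 : (0:ℝ) < (Nat.factorial (n + 2) : ℝ) := by exact_mod_cast Nat.factorial_pos _
    rw [div_le_iff₀ h3, mul_assoc, div_mul_eq_mul_div, mul_div_assoc, div_mul_cancel₀]
    · calc (lam * y) ^ (n + 2) ≤ |(lam * y) ^ (n + 2)| := le_abs_self _
        _ = lam ^ (n + 2) * |y| ^ (n + 2) := by
            rw [abs_pow, abs_mul, mul_pow, abs_of_nonneg hlam]
        _ ≤ lam ^ (n + 2) * (|y| ^ 2 * B ^ n) := by
            apply mul_le_mul_of_nonneg_left _ (by positivity)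
            calc |y| ^ (n + 2) = |y| ^ 2 * |y| ^ n := by rw [← pow_add]; ring_nf
              _ ≤ |y| ^ 2 * B ^ n := by
                  apply mul_le_mul_of_nonneg_left _ (by positivity)
                  exact pow_le_pow_left₀ (abs_nonneg _) hy n
        _ = y ^ 2 * ((lam * B) ^ (n + 2) / B ^ 2) := by
            rw [mul_pow, sq_abs]
            field_simp
            ring
    · positivity
  have := key
  rw [exp_sub_one_sub] at this
  linarith [this]

lemma integrable_of_abs_bound {X : Type*} [MeasurableSpace X] {μ : Measure X}
    [IsFiniteMeasure μ] {f : X → ℝ} (hf : Measurable f) {C : ℝ}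
    (h : ∀ᵐ x ∂μ, |f x| ≤ C) : Integrable f μ :=
  ⟨hf.aestronglyMeasurable, HasFiniteIntegral.of_bounded (C := C)
    (by simpa [Real.norm_eq_abs] using h)⟩

lemma mgf_bound {X : Type*} [MeasurableSpace X] (μ : Measure X) [IsProbabilityMeasure μ]
    (η : X → ℝ) (hmeas : Measurable η) (hint : Integrable η μ)
    (hη0 : ∫ x, η x ∂μ = 0) (B lam v : ℝ) (hB : 0 < B) (hlam : 0 ≤ lam)
    (hbd : ∀ᵐ x ∂μ, |η x| ≤ B) (hv : ∫ x, (η x) ^ 2 ∂μ ≤ v) (hv0 : 0 ≤ v) :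
    ∫ x, Real.exp (lam * η x) ∂μ ≤
      Real.exp (v * ((Real.exp (lam * B) - 1 - lam * B) / B ^ 2)) := by
  set g : ℝ := (Real.exp (lam * B) - 1 - lam * B) / B ^ 2 with hg
  have hg0 : 0 ≤ g := by
    apply div_nonneg _ (by positivity)
    have := Real.add_one_le_exp (lam * B)
    linarith
  have hη2int : Integrable (fun x => (η x) ^ 2) μ :=
    integrable_of_abs_bound (hmeas.pow_const 2) (C := B ^ 2)
      (hbd.mono fun x hx => by
        rw [abs_pow, sq_abs, ← sq_abs (η x)]
        exact pow_le_pow_left₀ (abs_nonneg _) hx 2)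
  have hexpint : Integrable (fun x => Real.exp (lam * η x)) μ :=
    integrable_of_abs_bound (by fun_prop) (C := Real.exp (lam * B))
      (hbd.mono fun x hx => by
        rw [abs_of_nonneg (Real.exp_pos _).le]
        exact Real.exp_le_exp.2 (mul_le_mul_of_nonneg_left
          ((le_abs_self _).trans hx) hlam))
  have hrhs : Integrable (fun x => 1 + lam * η x + (η x) ^ 2 / B ^ 2 *
      (Real.exp (lam * B) - 1 - lam * B)) μ := by
    apply Integrable.add
    · exact (integrable_const 1).add (hint.const_mul lam)
    · have : (fun x => (η x) ^ 2 / B ^ 2 * (Real.exp (lam * B) - 1 - lam * B))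
          = fun x => ((Real.exp (lam * B) - 1 - lam * B) / B ^ 2) * (η x) ^ 2 := by
        funext x; ring
      rw [this]
      exact hη2int.const_mul _
  have hptwise : ∀ᵐ x ∂μ, Real.exp (lam * η x) ≤
      1 + lam * η x + (η x) ^ 2 / B ^ 2 * (Real.exp (lam * B) - 1 - lam * B) :=
    hbd.mono fun x hx => aux1 hB hlam hx
  calc ∫ x, Real.exp (lam * η x) ∂μ
      ≤ ∫ x, (1 + lam * η x + (η x) ^ 2 / B ^ 2 *
          (Real.exp (lam * B) - 1 - lam * B)) ∂μ :=
        integral_mono_ae hexpint hrhs hptwise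
    _ = 1 + lam * ∫ x, η x ∂μ + g * ∫ x, (η x) ^ 2 ∂μ := by
        have heq : (fun x => 1 + lam * η x + (η x) ^ 2 / B ^ 2 *
            (Real.exp (lam * B) - 1 - lam * B))
            = fun x => (1 + lam * η x) + g * (η x) ^ 2 := by
          funext x; rw [hg]; ring
        have h1 : Integrable (fun x => 1 + lam * η x) μ :=
          (integrable_const 1).add (hint.const_mul lam)
        have e1 : ∫ x, ((1 + lam * η x) + g * (η x) ^ 2) ∂μ
            = (∫ x, (1 + lam * η x) ∂μ) + ∫ x, g * (η x) ^ 2 ∂μ :=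
          integral_add h1 (hη2int.const_mul g)
        have e2 : ∫ x, ((1 : ℝ) + lam * η x) ∂μ
            = (∫ _x, (1 : ℝ) ∂μ) + ∫ x, lam * η x ∂μ :=
          integral_add (integrable_const 1) (hint.const_mul lam)
        rw [heq, e1, e2, integral_const, integral_const_mul, integral_const_mul]
        simp only [measure_univ, probReal_univ, ENNReal.toReal_one, smul_eq_mul, mul_one]
    _ = 1 + g * ∫ x, (η x) ^ 2 ∂μ := by rw [hη0]; ring
    _ ≤ 1 + g * v := by nlinarith [mul_le_mul_of_nonneg_left hv hg0]
    _ ≤ Real.exp (g * v) := by linarith [Real.add_one_le_exp (g * v)]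
    _ = Real.exp (v * g) := by rw [mul_comm]

set_option maxHeartbeats 2000000 in
/-- one-sided Bernstein-type ratio probability inequality.
If ξ has mean μ̄ ≥ 0, |ξ − μ̄| ≤ B a.s. and ∫ξ² ≤ c∫ξ, then for ε > 0, 0 < γ ≤ 1 and
m ≥ 1, the μ^{⊗m}-probability that (μ̄ − (1/m)Σξ(zᵢ))/√(μ̄+ε) > γ√ε is at most
exp(−3γ²mε/(6c+2B)). -/
theorem stmt5 {X : Type*} [MeasurableSpace X] (μ : Measure X) [IsProbabilityMeasure μ]
    (ξ : X → ℝ) (hmeas : Measurable ξ) (hint : Integrable ξ μ)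
    (hmean : 0 ≤ ∫ x, ξ x ∂μ)
    (B c : ℝ) (hB : 0 < B) (hc : 0 < c)
    (hbd : ∀ᵐ x ∂μ, |ξ x - ∫ y, ξ y ∂μ| ≤ B)
    (hvar : ∫ x, (ξ x) ^ 2 ∂μ ≤ c * ∫ x, ξ x ∂μ)
    (ε γ : ℝ) (hε : 0 < ε) (hγ0 : 0 < γ) (hγ1 : γ ≤ 1)
    (m : ℕ) (hm : 1 ≤ m) :
    Measure.pi (fun _ : Fin m => μ)
        {z : Fin m → X |
          ((∫ x, ξ x ∂μ) - (1 / (m : ℝ)) * ∑ i, ξ (z i)) /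
              Real.sqrt ((∫ x, ξ x ∂μ) + ε) > γ * Real.sqrt ε} ≤
      ENNReal.ofReal (Real.exp (-(3 * γ ^ 2 * m * ε) / (6 * c + 2 * B))) := by
  have hmpos : (0:ℝ) < m := by exact_mod_cast Nat.lt_of_lt_of_le Nat.zero_lt_one hm
  set mb := ∫ x, ξ x ∂μ with hmb
  set A := mb + ε with hA
  have hA0 : 0 < A := by positivity
  have hεA : ε ≤ A := by simp only [hA]; linarith
  set t := γ * Real.sqrt (ε * A) with ht
  have hsq0 : 0 < Real.sqrt (ε * A) := Real.sqrt_pos.2 (by positivity)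
  have ht0 : 0 < t := mul_pos hγ0 hsq0
  have htA : t ≤ A := by
    calc t ≤ 1 * Real.sqrt (ε * A) := by
          apply mul_le_mul_of_nonneg_right hγ1 hsq0.le
      _ = Real.sqrt (ε * A) := one_mul _
      _ ≤ Real.sqrt (A * A) := Real.sqrt_le_sqrt (by nlinarith)
      _ = A := by rw [Real.sqrt_mul_self hA0.le]
  have ht2 : t ^ 2 = γ ^ 2 * (ε * A) := by
    rw [ht, mul_pow, Real.sq_sqrt (by positivity)]
  set V := c * A with hV
  have hV0 : 0 < V := by positivity
  set D := V + B * t / 3 with hD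
  have hD0 : 0 < D := by positivity
  set lam := t / D with hlam
  have hlam0 : 0 < lam := div_pos ht0 hD0
  clear_value A t V D lam
  -- centered variable
  set η : X → ℝ := fun x => mb - ξ x with hη
  have hηmeas : Measurable η := measurable_const.sub hmeas
  have hηint : Integrable η μ := (integrable_const mb).sub hint
  have hη0 : ∫ x, η x ∂μ = 0 := by
    rw [hη]
    rw [integral_sub (integrable_const mb) hint, integral_const]
    simp [hmb]
  have hηbd : ∀ᵐ x ∂μ, |η x| ≤ B := hbd.mono fun x hx => by
    rw [hη]; rw [abs_sub_comm]; exact hx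
  -- variance bound
  have hη2int : Integrable (fun x => (η x) ^ 2) μ :=
    integrable_of_abs_bound (hηmeas.pow_const 2) (C := B ^ 2)
      (hηbd.mono fun x hx => by
        rw [abs_pow, sq_abs, ← sq_abs (η x)]
        exact pow_le_pow_left₀ (abs_nonneg _) hx 2)
  have hξ2int : Integrable (fun x => (ξ x) ^ 2) μ := by
    have heq : (fun x => (ξ x) ^ 2)
        = fun x => ((η x) ^ 2 - (2 * mb) * η x) + mb ^ 2 := by
      funext x; rw [hη]; ring
    rw [heq]
    exact (hη2int.sub (hηint.const_mul _)).add (integrable_const _)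
  have hηvar : ∫ x, (η x) ^ 2 ∂μ ≤ V := by
    have heq : (fun x => (η x) ^ 2)
        = fun x => ((ξ x) ^ 2 - (2 * mb) * ξ x) + mb ^ 2 := by
      funext x; rw [hη]; ring
    have e1 : ∫ x, (η x) ^ 2 ∂μ
        = (∫ x, ((ξ x) ^ 2 - (2 * mb) * ξ x) ∂μ) + ∫ _x, mb ^ 2 ∂μ := by
      rw [heq]
      exact integral_add (hξ2int.sub (hint.const_mul _)) (integrable_const _)
    have e2 : ∫ x, ((ξ x) ^ 2 - (2 * mb) * ξ x) ∂μ
        = (∫ x, (ξ x) ^ 2 ∂μ) - ∫ x, (2 * mb) * ξ x ∂μ :=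
      integral_sub hξ2int (hint.const_mul _)
    rw [e1, e2, integral_const_mul, integral_const] at *
    simp only [measure_univ, probReal_univ, ENNReal.toReal_one, smul_eq_mul, one_mul] at e1 ⊢
    rw [← hmb, hV, hA]
    nlinarith [sq_nonneg mb, hvar, hc.le, hε.le]
  -- exp integrability over μ
  have hexpint : Integrable (fun x => Real.exp (lam * η x)) μ :=
    integrable_of_abs_bound (by fun_prop) (C := Real.exp (lam * B))
      (hηbd.mono fun x hx => by
        rw [abs_of_nonneg (Real.exp_pos _).le]
        exact Real.exp_le_exp.2 (mul_le_mul_of_nonneg_left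
          ((le_abs_self _).trans hx) hlam0.le))
  -- sum and subset
  set S : (Fin m → X) → ℝ := fun z => ∑ i, η (z i) with hS
  set PP : Measure (Fin m → X) := Measure.pi (fun _ : Fin m => μ) with hPP
  have hsub : {z : Fin m → X |
      (mb - (1 / (m : ℝ)) * ∑ i, ξ (z i)) / Real.sqrt (mb + ε) > γ * Real.sqrt ε}
      ⊆ {z : Fin m → X | (m : ℝ) * t ≤ S z} := by
    intro z hz
    simp only [Set.mem_setOf_eq] at hz ⊢
    have hsA : 0 < Real.sqrt (mb + ε) := Real.sqrt_pos.2 (by rw [← hA]; exact hA0)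
    have h1 : γ * Real.sqrt ε * Real.sqrt (mb + ε) < mb - (1 / (m : ℝ)) * ∑ i, ξ (z i) := by
      rw [← lt_div_iff₀ hsA]; exact hz
    have h2 : t < mb - (1 / (m : ℝ)) * ∑ i, ξ (z i) := by
      have he : t = γ * Real.sqrt ε * Real.sqrt (mb + ε) := by
        rw [ht, hA, Real.sqrt_mul hε.le, mul_assoc]
      rw [he]; exact h1
    have h3 : S z = (m : ℝ) * (mb - (1 / (m : ℝ)) * ∑ i, ξ (z i)) := by
      rw [hS]
      simp only [hη]
      rw [Finset.sum_sub_distrib, Finset.sum_const, Finset.card_univ, Fintype.card_fin]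
      field_simp
      ring
    rw [h3]
    exact mul_le_mul_of_nonneg_left h2.le hmpos.le
  -- product structure
  letI : MeasureSpace X := ⟨μ⟩
  have hvol : (volume : Measure (Fin m → X)) = PP := by
    rw [hPP]; exact volume_pi
  have hprodeq : (fun z : Fin m → X => Real.exp (lam * S z))
      = fun z => ∏ i, Real.exp (lam * η (z i)) := by
    funext z
    rw [hS, Finset.mul_sum, Real.exp_sum]
  have hintS : Integrable (fun z : Fin m → X => Real.exp (lam * S z)) PP := by
    rw [hprodeq, ← hvol]
    exact Integrable.fintype_prod (f := fun _ x => Real.exp (lam * η x)) fun _ => hexpint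
  have hmgf : ProbabilityTheory.mgf S PP lam = (∫ x, Real.exp (lam * η x) ∂μ) ^ m := by
    rw [ProbabilityTheory.mgf]
    calc ∫ z, Real.exp (lam * S z) ∂PP = ∫ z : Fin m → X, ∏ i, Real.exp (lam * η (z i)) := by
          rw [hprodeq, hvol]
      _ = (∫ x, Real.exp (lam * η x) ∂μ) ^ m := by
          rw [hvol, hPP, integral_fintype_prod_eq_pow (ι := Fin m) (fun x => Real.exp (lam * η x)),
            Fintype.card_fin]
  -- chernoff
  have hchern := ProbabilityTheory.measure_ge_le_exp_mul_mgf (μ := PP) (X := S)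
    (t := lam) ((m : ℝ) * t) hlam0.le hintS
  -- mgf bound
  have hmgfb : ∫ x, Real.exp (lam * η x) ∂μ ≤
      Real.exp (V * ((Real.exp (lam * B) - 1 - lam * B) / B ^ 2)) :=
    mgf_bound μ η hηmeas hηint hη0 B lam V hB hlam0.le hηbd hηvar hV0.le
  -- analytic bound on the exponent
  have hlamB3 : lam * B < 3 := by
    rw [hlam, div_mul_eq_mul_div, div_lt_iff₀ hD0, hD]
    nlinarith
  have hgb : (Real.exp (lam * B) - 1 - lam * B) / B ^ 2 ≤
      lam ^ 2 / (2 * (1 - lam * B / 3)) := by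
    have h1 := aux2 (x := lam * B) (by positivity) hlamB3
    have h2 : 0 < 1 - lam * B / 3 := by
      have : lam * B / 3 < 1 := by linarith
      linarith
    have h3 := (le_div_iff₀ (by linarith : (0:ℝ) < 2 * (1 - lam * B / 3))).1 h1
    rw [div_le_div_iff₀ (by positivity) (by linarith : (0:ℝ) < 2 * (1 - lam * B / 3))]
    exact le_of_le_of_eq h3 (mul_pow lam B 2)
  have hDne : D ≠ 0 := hD0.ne'
  have hob : 1 - lam * B / 3 = V / D := by
    rw [hlam, hD]
    field_simp
    ring
  have hVexp : V * ((Real.exp (lam * B) - 1 - lam * B) / B ^ 2) ≤ t ^ 2 / (2 * D) := by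
    have h2 : V * (lam ^ 2 / (2 * (1 - lam * B / 3))) = t ^ 2 / (2 * D) := by
      rw [hob, hlam]
      field_simp
    calc V * ((Real.exp (lam * B) - 1 - lam * B) / B ^ 2)
        ≤ V * (lam ^ 2 / (2 * (1 - lam * B / 3))) :=
          mul_le_mul_of_nonneg_left hgb hV0.le
      _ = t ^ 2 / (2 * D) := h2
  -- final numeric inequality (per-sample)
  have hfinal : 3 * γ ^ 2 * ε / (6 * c + 2 * B) ≤ lam * t - t ^ 2 / (2 * D) := by
    have hlt : lam * t = t ^ 2 / D := by rw [hlam]; ring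
    have h1 : lam * t - t ^ 2 / (2 * D) = t ^ 2 / (2 * D) := by
      rw [hlt]
      rw [div_sub_div _ _ hDne (by positivity : (2:ℝ) * D ≠ 0)]
      rw [div_eq_div_iff (by positivity) (by positivity)]
      ring
    rw [h1, div_le_div_iff₀ (by linarith : (0:ℝ) < 6 * c + 2 * B)
      (by linarith : (0:ℝ) < 2 * D), ht2, hD, hV]
    nlinarith [mul_nonneg (mul_nonneg hB.le (mul_nonneg (sq_nonneg γ) hε.le))
      (sub_nonneg.2 htA), hε.le, hγ0.le, hA0.le, hc.le]
  -- assemble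
  have hrealchain : (PP {z : Fin m → X | (m : ℝ) * t ≤ S z}).toReal ≤
      Real.exp (-(3 * γ ^ 2 * m * ε) / (6 * c + 2 * B)) := by
    calc (PP {z : Fin m → X | (m : ℝ) * t ≤ S z}).toReal
        ≤ Real.exp (-lam * ((m : ℝ) * t)) * ProbabilityTheory.mgf S PP lam := hchern
      _ ≤ Real.exp (-lam * ((m : ℝ) * t)) *
            Real.exp (V * ((Real.exp (lam * B) - 1 - lam * B) / B ^ 2)) ^ m := by
          apply mul_le_mul_of_nonneg_left _ (Real.exp_pos _).le
          rw [hmgf]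
          exact pow_le_pow_left₀ (integral_nonneg fun x => (Real.exp_pos _).le) hmgfb m
      _ = Real.exp (-lam * ((m : ℝ) * t)
            + (m : ℝ) * (V * ((Real.exp (lam * B) - 1 - lam * B) / B ^ 2))) := by
          rw [← Real.exp_nat_mul, ← Real.exp_add]
      _ ≤ Real.exp (-(3 * γ ^ 2 * m * ε) / (6 * c + 2 * B)) := by
          apply Real.exp_le_exp.2
          have h2 : -lam * ((m : ℝ) * t)
              + (m : ℝ) * (V * ((Real.exp (lam * B) - 1 - lam * B) / B ^ 2))
              ≤ -((m : ℝ) * (lam * t - t ^ 2 / (2 * D))) := by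
            nlinarith [mul_le_mul_of_nonneg_left hVexp hmpos.le]
          apply h2.trans
          rw [neg_div, neg_le_neg_iff]
          calc 3 * γ ^ 2 * ↑m * ε / (6 * c + 2 * B)
              = (m : ℝ) * (3 * γ ^ 2 * ε / (6 * c + 2 * B)) := by ring
            _ ≤ (m : ℝ) * (lam * t - t ^ 2 / (2 * D)) :=
              mul_le_mul_of_nonneg_left hfinal hmpos.le
  rw [← hA] at hsub
  calc PP {z : Fin m → X |
        (mb - (1 / (m : ℝ)) * ∑ i, ξ (z i)) / Real.sqrt A > γ * Real.sqrt ε}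
      ≤ PP {z : Fin m → X | (m : ℝ) * t ≤ S z} := measure_mono hsub
    _ = ENNReal.ofReal ((PP {z : Fin m → X | (m : ℝ) * t ≤ S z}).toReal) :=
        (ENNReal.ofReal_toReal (measure_ne_top _ _)).symm
    _ ≤ ENNReal.ofReal (Real.exp (-(3 * γ ^ 2 * m * ε) / (6 * c + 2 * B))) :=
        ENNReal.ofReal_le_ofReal hrealchain
end

section
/- Let S be a nonempty subset of [0,M]^Ω, let f ∈ [0,M]^Ω, and for u : Ω → ℝ define E(u) = (1/|Ω|)·Σ_{k∈Ω}((Au)[k] − (Af)[k])² and, for z = (k₁,…,k_m) ∈ Ω^m, E_z(u) = (1/m)·Σ_{i=1}^m ((Au)[k_i] − (Af)[k_i])². Then for every ε > 0 and every γ with 0 < γ ≤ 1, P{ z ∈ Ω^m : sup_{u∈S} (E(u) − E_z(u))/√(E(u) + ε) > 4γ√ε } ≤ N(S, γε/(2‖A‖²_∞M)) · exp(−3γ²mε/(8‖A‖²_∞M²)). -/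
noncomputable section

open scoped BigOperators

namespace WFrame

/-- convolution of finitely supported sequences on an additive group -/
def fconv {G : Type*} [AddZeroClass G] (f g : G →₀ ℝ) : G →₀ ℝ :=
  f.sum fun a c => g.sum fun b d => Finsupp.single (a + b) (c * d)

/-- convolution power; `fpow f 0` is the Dirac delta at 0 -/
def fpow {G : Type*} [AddZeroClass G] (f : G →₀ ℝ) : ℕ → (G →₀ ℝ)
  | 0 => Finsupp.single 0 1
  | n + 1 => fconv (fpow f n) f

/-- the 1st order average filter p = δ₀ + δ₁ -/
def pF : ℤ →₀ ℝ := Finsupp.single 0 1 + Finsupp.single 1 1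

/-- the 1st order difference filter q = δ₀ − δ₁ -/
def qF : ℤ →₀ ℝ := Finsupp.single 0 1 - Finsupp.single 1 1

/-- j_r = 1 if r odd, 0 if r even -/
def jr (r : ℕ) : ℤ := if r % 2 = 1 then 1 else 0

/-- univariate B-spline UEP filter `a_α`; `aF r α k = aα[k]`.
`Finsupp.mapDomain (· + jr r)` shifts the sequence so that its value at `k` is the
value of the original sequence at `k - jr r`. -/
def aF (r α : ℕ) : ℤ →₀ ℝ :=
  if α = 0 then ((2:ℝ) ^ (-(r:ℤ))) • Finsupp.mapDomain (· + jr r) (fpow pF r)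
  else ((-1:ℝ) ^ (α + 1) * (2:ℝ) ^ (-(r:ℤ)) * Real.sqrt (r.choose α)) •
    Finsupp.mapDomain (· + jr r) (fconv (fpow pF (r - α)) (fpow qF α))

/-- tensor product of two finitely supported sequences -/
def tens2 (f g : ℤ →₀ ℝ) : (ℤ × ℤ) →₀ ℝ :=
  Finsupp.onFinset (f.support ×ˢ g.support) (fun k => f k.1 * g k.2) (fun k hk => by
    simp only [Finset.mem_product, Finsupp.mem_support_iff]
    exact ⟨left_ne_zero_of_mul hk, right_ne_zero_of_mul hk⟩)

/-- tensor product filter `a_{(α₁,α₂)}[(k₁,k₂)] = a_{α₁}[k₁]·a_{α₂}[k₂]` -/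
def a2 (r : ℕ) (α : ℕ × ℕ) : (ℤ × ℤ) →₀ ℝ := tens2 (aF r α.1) (aF r α.2)

/-- the band set B = {0,…,r}² \ {(0,0)} -/
def Band (r : ℕ) : Finset (ℕ × ℕ) :=
  (Finset.range (r + 1) ×ˢ Finset.range (r + 1)).erase (0, 0)

/-- upsampling: `upSample l a` equals `a[k/2^l]` on `2^l ℤ²` and `0` elsewhere -/
def upSample (l : ℕ) (a : (ℤ × ℤ) →₀ ℝ) : (ℤ × ℤ) →₀ ℝ :=
  Finsupp.mapDomain (fun k => ((2 ^ l : ℤ) * k.1, (2 ^ l : ℤ) * k.2)) a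

/-- `lowChain r l = ã_{l−1,(0,0)} ∗ ⋯ ∗ ã_{0,(0,0)}` (Dirac delta for `l = 0`) -/
def lowChain (r : ℕ) : ℕ → ((ℤ × ℤ) →₀ ℝ)
  | 0 => Finsupp.single 0 1
  | l + 1 => fconv (upSample l (a2 r (0, 0))) (lowChain r l)

/-- multi-level filter `a_{l,α} = ã_{l,α} ∗ ã_{l−1,(0,0)} ∗ ⋯ ∗ ã_{0,(0,0)}` -/
def aLvl (r l : ℕ) (α : ℕ × ℕ) : (ℤ × ℤ) →₀ ℝ :=
  fconv (upSample l (a2 r α)) (lowChain r l)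

/-- periodization `P_N(a)` of a finitely supported sequence on ℤ², as a function on
(ℤ/Nℤ)²: `per N a k = Σ_{m ≡ k (mod N)} a[m]`. -/
def per (N : ℕ) (a : (ℤ × ℤ) →₀ ℝ) (k : ZMod N × ZMod N) : ℝ :=
  ∑ m ∈ a.support, if ((m.1 : ZMod N), (m.2 : ZMod N)) = k then a m else 0

/-- periodic convolution `(a ⊛ u)[k] = Σ_{n∈Ω} P_N(a)[k−n]·u[n]` -/
def pconv (N : ℕ) [NeZero N] (a : (ℤ × ℤ) →₀ ℝ) (u : ZMod N × ZMod N → ℝ)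
    (k : ZMod N × ZMod N) : ℝ :=
  ∑ n : ZMod N × ZMod N, per N a (k - n) * u n

/-- reflection `a[−·]` -/
def refl2 (a : (ℤ × ℤ) →₀ ℝ) : (ℤ × ℤ) →₀ ℝ := Finsupp.mapDomain (fun k => -k) a

/-- wavelet frame coefficients `W_{l,α}u = a_{l,α}[−·] ⊛ u` -/
def Wc (r N : ℕ) [NeZero N] (l : ℕ) (α : ℕ × ℕ) (u : ZMod N × ZMod N → ℝ) :
    ZMod N × ZMod N → ℝ :=
  pconv N (refl2 (aLvl r l α)) u

/-- `‖Wu‖₁` -/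
def wnorm1 (r N L : ℕ) [NeZero N] (u : ZMod N × ZMod N → ℝ) : ℝ :=
  ∑ k : ZMod N × ZMod N, ∑ l ∈ Finset.range L, ∑ α ∈ Band r, |Wc r N l α u k|

/-- weighted norm `‖λ·Wu‖₁` -/
def wnormW (r N L : ℕ) [NeZero N] (lam : ℕ → ℕ × ℕ → ZMod N × ZMod N → ℝ)
    (u : ZMod N × ZMod N → ℝ) : ℝ :=
  ∑ k : ZMod N × ZMod N, ∑ l ∈ Finset.range L, ∑ α ∈ Band r,
    lam l α k * |Wc r N l α u k|

/-- discrete total variation (no wrap-around) on the grid {0,…,N−1}² -/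
def tv (N : ℕ) [NeZero N] (u : ZMod N × ZMod N → ℝ) : ℝ :=
  (∑ i ∈ Finset.range (N - 1), ∑ j ∈ Finset.range N,
      |u ((i : ZMod N) + 1, (j : ZMod N)) - u ((i : ZMod N), (j : ZMod N))|) +
  (∑ i ∈ Finset.range N, ∑ j ∈ Finset.range (N - 1),
      |u ((i : ZMod N), (j : ZMod N) + 1) - u ((i : ZMod N), (j : ZMod N))|)

/-- covering number of `S` by closed ℓ∞-balls of radius `t` with centers in `[0,Mb]^Ω` -/
def coverNum {X : Type*} (Mb t : ℝ) (S : Set (X → ℝ)) : ℕ :=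
  sInf {K : ℕ | ∃ v : Fin K → X → ℝ, (∀ j x, v j x ∈ Set.Icc 0 Mb) ∧
    ∀ u ∈ S, ∃ j, ∀ x, |u x - v j x| ≤ t}

open scoped Classical in
/-- probability of an event under i.i.d. uniform sampling of `m` points from a finite set -/
def prob {X : Type*} [Fintype X] {m : ℕ} (E : Set (Fin m → X)) : ℝ :=
  (∑ z : Fin m → X, if z ∈ E then (1:ℝ) else 0) / (Fintype.card X : ℝ) ^ m

end WFrame

namespace WFrame

lemma exp_neg_le_quad {t : ℝ} (ht : 0 ≤ t) : Real.exp (-t) ≤ 1 - t + t^2/2 := by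
  have h1 : 1 + t + t^2/2 ≤ Real.exp t := by
    have := Real.sum_le_exp_of_nonneg ht 3
    simp [Finset.sum_range_succ] at this
    nlinarith [this]
  have hpos : (0:ℝ) < 1 + t + t^2/2 := by nlinarith
  have h2 : Real.exp (-t) ≤ 1 / (1 + t + t^2/2) := by
    rw [Real.exp_neg, inv_eq_one_div]
    exact one_div_le_one_div_of_le (by positivity) h1
  have h3 : 1 / (1 + t + t^2/2) ≤ 1 - t + t^2/2 := by
    rw [div_le_iff₀ hpos]
    nlinarith [sq_nonneg t, sq_nonneg (t^2)]
  linarith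

set_option maxHeartbeats 1000000 in
/-- one-sided (lower-tail) Bernstein-type bound for i.i.d. uniform samples -/
lemma chernoff {X : Type*} [Fintype X] (m : ℕ) (hm : 1 ≤ m) (g : X → ℝ) (B μ : ℝ)
    (hB : 0 < B) (hg0 : ∀ x, 0 ≤ g x) (hgB : ∀ x, g x ≤ B)
    (hμdef : μ = (∑ x, g x) / (Fintype.card X : ℝ)) (hμ : 0 < μ)
    (α : ℝ) (hα : 0 < α) :
    prob {z : Fin m → X | μ - (1/(m:ℝ)) * ∑ i, g (z i) > α}
      ≤ Real.exp (-(m * α^2) / (2 * B * μ)) := by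
  classical
  have hcX : 0 < Fintype.card X := by
    rcases Nat.eq_zero_or_pos (Fintype.card X) with h | h
    · exfalso
      have hE : IsEmpty X := Fintype.card_eq_zero_iff.mp h
      rw [Finset.univ_eq_empty, Finset.sum_empty] at hμdef
      rw [hμdef] at hμ
      simp at hμ
    · exact h
  have hc : (0:ℝ) < (Fintype.card X : ℝ) := by exact_mod_cast hcX
  set c : ℝ := (Fintype.card X : ℝ) with hcdef
  have hmpos : (0:ℝ) < m := by exact_mod_cast hm
  set lam : ℝ := α / (B * μ) with hlamdef
  have hlam : 0 < lam := by positivity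
  -- indicator bound
  have hind : ∀ z : Fin m → X,
      (if z ∈ {z : Fin m → X | μ - (1/(m:ℝ)) * ∑ i, g (z i) > α} then (1:ℝ) else 0)
        ≤ Real.exp (lam * m * (μ - α)) * ∏ i, Real.exp (-lam * g (z i)) := by
    intro z
    have hprod : ∏ i, Real.exp (-lam * g (z i)) = Real.exp (∑ i, -lam * g (z i)) :=
      (Real.exp_sum _ _).symm
    rw [hprod, ← Real.exp_add]
    split_ifs with h
    · rw [Real.one_le_exp_iff]
      have h' : μ - (1/(m:ℝ)) * ∑ i, g (z i) > α := h
      have h2 : m * α < m * μ - ∑ i, g (z i) := by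
        have := mul_lt_mul_of_pos_left h' hmpos
        rw [mul_sub] at this
        have : (m:ℝ) * ((1/(m:ℝ)) * ∑ i, g (z i)) = ∑ i, g (z i) := by
          field_simp
        linarith [mul_lt_mul_of_pos_left h' hmpos,
          show (m:ℝ) * ((1/(m:ℝ)) * ∑ i, g (z i)) = ∑ i, g (z i) by field_simp]
      have hsum : ∑ i, -lam * g (z i) = -lam * ∑ i, g (z i) := by
        rw [← Finset.mul_sum]
      rw [hsum]
      nlinarith
    · positivity
  -- sum over z of the product factorizes
  have hfact : ∑ z : Fin m → X, ∏ i, Real.exp (-lam * g (z i))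
      = (∑ x : X, Real.exp (-lam * g x)) ^ m :=
    (Fintype.sum_pow (fun x => Real.exp (-lam * g x)) m).symm
  -- MGF bound
  have hT : ∑ x : X, Real.exp (-lam * g x) ≤ c * Real.exp (-lam * μ + lam^2 * B * μ / 2) := by
    have step1 : ∑ x : X, Real.exp (-lam * g x)
        ≤ ∑ x : X, (1 - lam * g x + (lam * g x)^2 / 2) := by
      apply Finset.sum_le_sum
      intro x _
      have := exp_neg_le_quad (t := lam * g x) (mul_nonneg hlam.le (hg0 x))
      have heq : -(lam * g x) = -lam * g x := by ring
      rw [heq] at this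
      linarith [this]
    have hsum2 : ∑ x : X, (1 - lam * g x + (lam * g x)^2 / 2)
        ≤ c * (1 - lam * μ + lam^2 * B * μ / 2) := by
      have hg2 : ∀ x, (g x)^2 ≤ B * g x := fun x => by nlinarith [hg0 x, hgB x]
      have hSg : ∑ x : X, g x = c * μ := by
        rw [hμdef, hcdef]
        field_simp
      have hSg2 : ∑ x : X, (g x)^2 ≤ B * (c * μ) := by
        rw [← hSg, Finset.mul_sum]
        exact Finset.sum_le_sum fun x _ => hg2 x
      have hexpand : ∑ x : X, (1 - lam * g x + (lam * g x)^2 / 2)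
          = c - lam * (∑ x, g x) + lam^2 * (∑ x, (g x)^2) / 2 := by
        rw [Finset.sum_add_distrib, Finset.sum_sub_distrib, ← Finset.mul_sum]
        have h1 : ∑ _x : X, (1:ℝ) = c := by
          rw [Finset.sum_const, Finset.card_univ, hcdef]; simp
        have h2 : ∑ x : X, (lam * g x)^2 / 2 = lam^2 * (∑ x, (g x)^2) / 2 := by
          rw [Finset.mul_sum, Finset.sum_div]
          apply Finset.sum_congr rfl
          intro x _
          ring
        rw [h1, h2]
      rw [hexpand, hSg]
      nlinarith [sq_nonneg lam, hc]
    calc ∑ x : X, Real.exp (-lam * g x) ≤ c * (1 - lam * μ + lam^2 * B * μ / 2) :=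
          step1.trans hsum2
      _ ≤ c * Real.exp (-lam * μ + lam^2 * B * μ / 2) := by
          apply mul_le_mul_of_nonneg_left _ hc.le
          linarith [Real.add_one_le_exp (-lam * μ + lam^2 * B * μ / 2)]
  -- assemble
  have hTnn : 0 ≤ ∑ x : X, Real.exp (-lam * g x) :=
    Finset.sum_nonneg fun x _ => (Real.exp_pos _).le
  have hnum : ∑ z : Fin m → X,
      (if z ∈ {z : Fin m → X | μ - (1/(m:ℝ)) * ∑ i, g (z i) > α} then (1:ℝ) else 0)
      ≤ Real.exp (lam * m * (μ - α)) * (c * Real.exp (-lam * μ + lam^2 * B * μ / 2)) ^ m := by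
    calc _ ≤ ∑ z : Fin m → X, Real.exp (lam * m * (μ - α)) * ∏ i, Real.exp (-lam * g (z i)) :=
          Finset.sum_le_sum fun z _ => hind z
      _ = Real.exp (lam * m * (μ - α)) * ∑ z : Fin m → X, ∏ i, Real.exp (-lam * g (z i)) := by
          rw [Finset.mul_sum]
      _ = Real.exp (lam * m * (μ - α)) * (∑ x : X, Real.exp (-lam * g x)) ^ m := by rw [hfact]
      _ ≤ Real.exp (lam * m * (μ - α)) * (c * Real.exp (-lam * μ + lam^2 * B * μ / 2)) ^ m := by
          apply mul_le_mul_of_nonneg_left _ (Real.exp_pos _).le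
          exact pow_le_pow_left₀ hTnn hT m
  have hfinal : Real.exp (lam * m * (μ - α)) * (c * Real.exp (-lam * μ + lam^2 * B * μ / 2)) ^ m
      = c ^ m * Real.exp (-(m * α^2) / (2 * B * μ)) := by
    have e1 : (Real.exp (-lam * μ + lam^2 * B * μ / 2)) ^ m
        = Real.exp (m * (-lam * μ + lam^2 * B * μ / 2)) := (Real.exp_nat_mul _ m).symm
    rw [mul_pow, e1]
    rw [show Real.exp (lam * ↑m * (μ - α)) * (c ^ m * Real.exp (↑m * (-lam * μ + lam ^ 2 * B * μ / 2)))
        = c ^ m * (Real.exp (lam * ↑m * (μ - α)) * Real.exp (↑m * (-lam * μ + lam ^ 2 * B * μ / 2))) from by ring]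
    rw [← Real.exp_add]
    congr 1
    rw [hlamdef]
    field_simp
    ring
  rw [prob]
  rw [div_le_iff₀ (by positivity)]
  calc _ ≤ Real.exp (lam * m * (μ - α)) * (c * Real.exp (-lam * μ + lam^2 * B * μ / 2)) ^ m := by
        convert hnum using 2
    _ = c ^ m * Real.exp (-(m * α^2) / (2 * B * μ)) := hfinal
    _ = Real.exp (-(m * α^2) / (2 * B * μ)) * c ^ m := by ring


/-- single-center tail bound -/
lemma center_bound {X : Type*} [Fintype X] (m : ℕ) (hm : 1 ≤ m) (g : X → ℝ) (B μ : ℝ)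
    (hB : 0 < B) (hg0 : ∀ x, 0 ≤ g x) (hgB : ∀ x, g x ≤ B)
    (hμdef : μ = (∑ x, g x) / (Fintype.card X : ℝ))
    (ε γ : ℝ) (hε : 0 < ε) (hγ : 0 < γ) :
    prob {z : Fin m → X | μ - (1/(m:ℝ)) * ∑ i, g (z i)
        > γ * Real.sqrt ε * Real.sqrt (μ + ε)}
      ≤ Real.exp (-(3 * γ^2 * m * ε) / (8 * B)) := by
  classical
  have hμ0 : 0 ≤ μ := by
    rw [hμdef]
    apply div_nonneg (Finset.sum_nonneg fun x _ => hg0 x) (Nat.cast_nonneg _)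
  have hαpos : 0 < γ * Real.sqrt ε * Real.sqrt (μ + ε) := by
    have h1 : 0 < Real.sqrt ε := Real.sqrt_pos.mpr hε
    have h2 : 0 < Real.sqrt (μ + ε) := Real.sqrt_pos.mpr (by linarith)
    positivity
  rcases eq_or_lt_of_le hμ0 with hμz | hμpos
  · -- μ = 0 : event is empty
    have hE : {z : Fin m → X | μ - (1/(m:ℝ)) * ∑ i, g (z i)
        > γ * Real.sqrt ε * Real.sqrt (μ + ε)} = ∅ := by
      ext z
      simp only [Set.mem_setOf_eq, Set.mem_empty_iff_false, iff_false, not_lt]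
      have hs : 0 ≤ (1/(m:ℝ)) * ∑ i, g (z i) := by
        apply mul_nonneg (by positivity) (Finset.sum_nonneg fun i _ => hg0 (z i))
      nlinarith
    rw [hE]
    have : prob (∅ : Set (Fin m → X)) = 0 := by
      simp [prob]
    rw [this]
    exact (Real.exp_pos _).le
  · have hch := chernoff m hm g B μ hB hg0 hgB hμdef hμpos _ hαpos
    refine hch.trans (Real.exp_le_exp.mpr ?_)
    have hα2 : (γ * Real.sqrt ε * Real.sqrt (μ + ε))^2 = γ^2 * ε * (μ + ε) := by
      rw [mul_pow, mul_pow, Real.sq_sqrt hε.le, Real.sq_sqrt (by linarith)]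
    rw [hα2]
    rw [div_le_div_iff₀ (by positivity) (by positivity)]
    have hm0 : (0:ℝ) ≤ m := Nat.cast_nonneg _
    nlinarith [mul_nonneg (mul_nonneg (mul_nonneg (mul_nonneg hm0 (sq_nonneg γ)) hε.le) hB.le)
      (show (0:ℝ) ≤ 2*μ + 8*ε by linarith)]

/-- union bound -/
lemma prob_union_le {X : Type*} [Fintype X] [Nonempty X] {m K : ℕ}
    (E : Set (Fin m → X)) (F : Fin K → Set (Fin m → X))
    (h : ∀ z ∈ E, ∃ j, z ∈ F j) (b : ℝ) (hb : 0 ≤ b) (hF : ∀ j, prob (F j) ≤ b) :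
    prob E ≤ K * b := by
  classical
  have hc : (0:ℝ) < (Fintype.card X : ℝ) ^ m := by
    have : 0 < Fintype.card X := Fintype.card_pos
    positivity
  have key : ∑ z : Fin m → X, (if z ∈ E then (1:ℝ) else 0)
      ≤ ∑ j : Fin K, ∑ z : Fin m → X, (if z ∈ F j then (1:ℝ) else 0) := by
    rw [Finset.sum_comm]
    apply Finset.sum_le_sum
    intro z _
    by_cases hz : z ∈ E
    · obtain ⟨j, hj⟩ := h z hz
      rw [if_pos hz]
      calc (1:ℝ) = (if z ∈ F j then (1:ℝ) else 0) := (if_pos hj).symm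
        _ ≤ ∑ i : Fin K, (if z ∈ F i then (1:ℝ) else 0) :=
          Finset.single_le_sum (f := fun i => if z ∈ F i then (1:ℝ) else 0)
            (fun i _ => by show 0 ≤ (if z ∈ F i then (1:ℝ) else 0); split_ifs <;> norm_num) (Finset.mem_univ j)
    · rw [if_neg hz]
      exact Finset.sum_nonneg fun i _ => by split_ifs <;> norm_num
  have : prob E ≤ ∑ j : Fin K, prob (F j) := by
    rw [prob, div_le_iff₀ hc]
    calc ∑ z : Fin m → X, (if z ∈ E then (1:ℝ) else 0)
        ≤ ∑ j : Fin K, ∑ z : Fin m → X, (if z ∈ F j then (1:ℝ) else 0) := key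
      _ = (∑ j : Fin K, prob (F j)) * (Fintype.card X : ℝ) ^ m := by
          rw [Finset.sum_mul]
          apply Finset.sum_congr rfl
          intro j _
          rw [prob, div_mul_cancel₀ _ hc.ne']
  refine this.trans ?_
  calc ∑ j : Fin K, prob (F j) ≤ ∑ _j : Fin K, b := Finset.sum_le_sum fun j _ => hF j
    _ = K * b := by rw [Finset.sum_const]; simp

/-- a finite cover of `[0,Mb]^X` exists -/
lemma cover_set_nonempty {X : Type*} [Fintype X] (Mb t : ℝ) (hM : 0 < Mb) (ht : 0 < t)
    (S : Set (X → ℝ)) (hSM : ∀ u ∈ S, ∀ x, u x ∈ Set.Icc (0:ℝ) Mb) :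
    {K : ℕ | ∃ v : Fin K → X → ℝ, (∀ j x, v j x ∈ Set.Icc 0 Mb) ∧
      ∀ u ∈ S, ∃ j, ∀ x, |u x - v j x| ≤ t}.Nonempty := by
  classical
  set n := ⌈Mb / t⌉₊ with hn
  set e := (Fintype.equivFin (X → Fin (n+1))).symm with he
  refine ⟨Fintype.card (X → Fin (n+1)), fun j x => min (((e j x : ℕ) : ℝ) * t) Mb, ?_, ?_⟩
  · intro j x
    exact ⟨le_min (by positivity) hM.le, min_le_right _ _⟩
  · intro u hu
    have hux := hSM u hu
    have hφlt : ∀ x, ⌊u x / t⌋₊ < n + 1 := by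
      intro x
      have h1 : u x / t ≤ Mb / t := by
        gcongr
        exact (hux x).2
      calc ⌊u x / t⌋₊ ≤ ⌊Mb / t⌋₊ := Nat.floor_le_floor h1
        _ ≤ ⌈Mb / t⌉₊ := Nat.floor_le_ceil _
        _ < n + 1 := Nat.lt_succ_self _
    refine ⟨e.symm (fun x => ⟨⌊u x / t⌋₊, hφlt x⟩), ?_⟩
    intro x
    simp only [Equiv.apply_symm_apply]
    have h0 : (0:ℝ) ≤ u x := (hux x).1
    have hM' : u x ≤ Mb := (hux x).2
    have hfl : ((⌊u x / t⌋₊ : ℕ) : ℝ) * t ≤ u x := by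
      have h2 := Nat.floor_le (div_nonneg h0 ht.le)
      calc ((⌊u x / t⌋₊ : ℕ) : ℝ) * t ≤ (u x / t) * t :=
            mul_le_mul_of_nonneg_right h2 ht.le
        _ = u x := div_mul_cancel₀ _ ht.ne'
    have hub : u x < (((⌊u x / t⌋₊ : ℕ) : ℝ) + 1) * t := by
      have h3 := Nat.lt_floor_add_one (u x / t)
      calc u x = (u x / t) * t := (div_mul_cancel₀ _ ht.ne').symm
        _ < (((⌊u x / t⌋₊ : ℕ) : ℝ) + 1) * t := mul_lt_mul_of_pos_right h3 ht
    have hmin : min ((((⟨⌊u x / t⌋₊, hφlt x⟩ : Fin (n+1)) : ℕ) : ℝ) * t) Mb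
        = ((⌊u x / t⌋₊ : ℕ) : ℝ) * t := min_eq_left (hfl.trans hM')
    rw [hmin, abs_le]
    constructor <;> nlinarith


set_option maxHeartbeats 1000000 in
/-- Proposition 3.3 — uniform ratio deviation bound:
P{ z : sup_{u∈S} (E(u) − E_z(u))/√(E(u)+ε) > 4γ√ε }
  ≤ N(S, γε/(2‖A‖²M))·exp(−3γ²mε/(8‖A‖²M²)). -/
theorem stmt6 (N : ℕ) (hN : 2 ≤ N) [NeZero N] (M : ℝ) (hM : 0 < M)
    (A : (ZMod N × ZMod N → ℝ) →L[ℝ] (ZMod N × ZMod N → ℝ)) (hA : 0 < ‖A‖)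
    (S : Set (ZMod N × ZMod N → ℝ)) (hS : S.Nonempty)
    (hSM : ∀ u ∈ S, ∀ k, u k ∈ Set.Icc (0 : ℝ) M)
    (f : ZMod N × ZMod N → ℝ) (hfM : ∀ k, f k ∈ Set.Icc (0 : ℝ) M)
    (m : ℕ) (hm : 1 ≤ m)
    (ε γ : ℝ) (hε : 0 < ε) (hγ : 0 < γ) (hγ1 : γ ≤ 1) :
    prob {z : Fin m → ZMod N × ZMod N |
        (⨆ u : S, (((1 / ((N : ℝ) ^ 2)) * ∑ k, (A u (k) - A f k) ^ 2) -
            (1 / (m : ℝ)) * ∑ i, (A u (z i) - A f (z i)) ^ 2) /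
          Real.sqrt ((1 / ((N : ℝ) ^ 2)) * (∑ k, (A u (k) - A f k) ^ 2) + ε)) >
          4 * γ * Real.sqrt ε} ≤
      (coverNum M (γ * ε / (2 * ‖A‖ ^ 2 * M)) S : ℝ) *
        Real.exp (-(3 * γ ^ 2 * m * ε) / (8 * ‖A‖ ^ 2 * M ^ 2)) := by
  classical
  have hNpos : 0 < N := by omega
  have hNR : (0:ℝ) < (N:ℝ) := by exact_mod_cast hNpos
  have hcard : (Fintype.card (ZMod N × ZMod N) : ℝ) = (N:ℝ)^2 := by
    rw [Fintype.card_prod, ZMod.card]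
    push_cast
    ring
  set B : ℝ := ‖A‖^2 * M^2 with hBdef
  have hB : 0 < B := by positivity
  set t : ℝ := γ * ε / (2 * ‖A‖ ^ 2 * M) with htdef
  have ht : 0 < t := by positivity
  set g : (ZMod N × ZMod N → ℝ) → (ZMod N × ZMod N) → ℝ :=
    fun u k => (A u k - A f k)^2 with hgdef
  have hg0 : ∀ u k, 0 ≤ g u k := fun u k => sq_nonneg _
  -- pointwise bound from closeness
  have hdiff : ∀ (u w : ZMod N × ZMod N → ℝ) (c : ℝ), 0 ≤ c → (∀ x, |u x - w x| ≤ c) →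
      ∀ k, |A u k - A w k| ≤ ‖A‖ * c := by
    intro u w c hc hwc k
    have h1 : A (u - w) = A u - A w := map_sub A u w
    have h2 : A u k - A w k = A (u - w) k := by
      rw [h1, Pi.sub_apply]
    rw [h2]
    have h3 : ‖A (u - w)‖ ≤ ‖A‖ * ‖u - w‖ := A.le_opNorm _
    have h4 : ‖u - w‖ ≤ c := by
      rw [pi_norm_le_iff_of_nonneg hc]
      intro x
      simpa [Real.norm_eq_abs, Pi.sub_apply] using hwc x
    have h5 : |A (u - w) k| ≤ ‖A (u - w)‖ := by
      simpa [Real.norm_eq_abs] using norm_le_pi_norm (A (u - w)) k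
    calc |A (u - w) k| ≤ ‖A‖ * ‖u - w‖ := h5.trans h3
      _ ≤ ‖A‖ * c := mul_le_mul_of_nonneg_left h4 (norm_nonneg _)
  have habs : ∀ (u : ZMod N × ZMod N → ℝ), (∀ x, u x ∈ Set.Icc (0:ℝ) M) →
      ∀ k, |A u k - A f k| ≤ ‖A‖ * M := by
    intro u hu k
    apply hdiff u f M hM.le
    intro x
    have h1 := hu x
    have h2 := hfM x
    rw [Set.mem_Icc] at h1 h2
    rw [abs_le]
    constructor <;> linarith [h1.1, h1.2, h2.1, h2.2]
  have hgB : ∀ (u : ZMod N × ZMod N → ℝ), (∀ x, u x ∈ Set.Icc (0:ℝ) M) →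
      ∀ k, g u k ≤ B := by
    intro u hu k
    have h1 := habs u hu k
    have h2 : g u k = |A u k - A f k|^2 := (sq_abs _).symm
    rw [h2, hBdef]
    calc |A u k - A f k|^2 ≤ (‖A‖ * M)^2 :=
          pow_le_pow_left₀ (abs_nonneg _) h1 2
      _ = ‖A‖^2 * M^2 := by ring
  -- Lipschitz bound
  have hLip : ∀ (u w : ZMod N × ZMod N → ℝ), (∀ x, u x ∈ Set.Icc (0:ℝ) M) →
      (∀ x, w x ∈ Set.Icc (0:ℝ) M) → (∀ x, |u x - w x| ≤ t) →
      ∀ k, |g u k - g w k| ≤ γ * ε := by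
    intro u w hu hw hclose k
    have ha := habs u hu k
    have hb := habs w hw k
    have hab := hdiff u w t ht.le hclose k
    have hfact : g u k - g w k
        = ((A u k - A f k) - (A w k - A f k)) * ((A u k - A f k) + (A w k - A f k)) := by
      simp only [hgdef]
      ring
    have hsum : |(A u k - A f k) + (A w k - A f k)| ≤ 2 * (‖A‖ * M) := by
      calc |(A u k - A f k) + (A w k - A f k)| ≤ |A u k - A f k| + |A w k - A f k| :=
            abs_add_le _ _
        _ ≤ 2 * (‖A‖ * M) := by linarith
    have hab' : |(A u k - A f k) - (A w k - A f k)| ≤ ‖A‖ * t := by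
      have : (A u k - A f k) - (A w k - A f k) = A u k - A w k := by ring
      rw [this]
      exact hab
    calc |g u k - g w k| = |(A u k - A f k) - (A w k - A f k)|
          * |(A u k - A f k) + (A w k - A f k)| := by rw [hfact, abs_mul]
      _ ≤ (‖A‖ * t) * (2 * (‖A‖ * M)) := by
          apply mul_le_mul hab' hsum (abs_nonneg _) (by positivity)
      _ = γ * ε := by
          rw [htdef]
          field_simp
  -- existence of the cover
  have hKmem := Nat.sInf_mem (cover_set_nonempty M t hM ht S hSM)
  obtain ⟨v, hvIcc, hvcov⟩ : ∃ v : Fin (coverNum M t S) → (ZMod N × ZMod N) → ℝ,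
      (∀ j x, v j x ∈ Set.Icc (0:ℝ) M) ∧ ∀ u ∈ S, ∃ j, ∀ x, |u x - v j x| ≤ t := hKmem
  have hvIcc' : ∀ j, ∀ x, v j x ∈ Set.Icc (0:ℝ) M := hvIcc
  -- per-center events
  set μ' : Fin (coverNum M t S) → ℝ :=
    fun j => (∑ k, g (v j) k) / (Fintype.card (ZMod N × ZMod N) : ℝ) with hμ'def
  set F : Fin (coverNum M t S) → Set (Fin m → ZMod N × ZMod N) :=
    fun j => {z | μ' j - (1/(m:ℝ)) * ∑ i, g (v j) (z i)
      > γ * Real.sqrt ε * Real.sqrt (μ' j + ε)} with hFdef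
  have hFbound : ∀ j, prob (F j) ≤ Real.exp (-(3 * γ^2 * m * ε) / (8 * B)) := by
    intro j
    exact center_bound m hm (g (v j)) B (μ' j) hB (hg0 (v j)) (hgB (v j) (hvIcc j)) rfl
      ε γ hε hγ
  -- inclusion of the sup-event in the union
  have hincl : ∀ z ∈ {z : Fin m → ZMod N × ZMod N |
      (⨆ u : S, (((1 / ((N : ℝ) ^ 2)) * ∑ k, (A u (k) - A f k) ^ 2) -
          (1 / (m : ℝ)) * ∑ i, (A u (z i) - A f (z i)) ^ 2) /
        Real.sqrt ((1 / ((N : ℝ) ^ 2)) * (∑ k, (A u (k) - A f k) ^ 2) + ε)) >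
        4 * γ * Real.sqrt ε}, ∃ j, z ∈ F j := by
    intro z hz
    have hz' : 4 * γ * Real.sqrt ε < ⨆ u : S,
        (((1 / ((N : ℝ) ^ 2)) * ∑ k, (A u (k) - A f k) ^ 2) -
          (1 / (m : ℝ)) * ∑ i, (A u (z i) - A f (z i)) ^ 2) /
        Real.sqrt ((1 / ((N : ℝ) ^ 2)) * (∑ k, (A u (k) - A f k) ^ 2) + ε) := hz
    have : Nonempty S := hS.to_subtype
    have hsqε : 0 < Real.sqrt ε := Real.sqrt_pos.mpr hε
    have hbdd : BddAbove (Set.range (fun u : S =>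
        (((1 / ((N : ℝ) ^ 2)) * ∑ k, (A u (k) - A f k) ^ 2) -
          (1 / (m : ℝ)) * ∑ i, (A u (z i) - A f (z i)) ^ 2) /
        Real.sqrt ((1 / ((N : ℝ) ^ 2)) * (∑ k, (A u (k) - A f k) ^ 2) + ε))) := by
      refine ⟨B / Real.sqrt ε, ?_⟩
      rintro _ ⟨u, rfl⟩
      simp only
      set Eu : ℝ := (1 / ((N : ℝ) ^ 2)) * ∑ k, (A u (k) - A f k) ^ 2 with hEudef
      set Ezu : ℝ := (1 / (m : ℝ)) * ∑ i, (A u (z i) - A f (z i)) ^ 2 with hEzudef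
      have hEu0 : 0 ≤ Eu := by
        apply mul_nonneg (by positivity)
        exact Finset.sum_nonneg fun k _ => sq_nonneg _
      have hEzu0 : 0 ≤ Ezu := by
        apply mul_nonneg (by positivity)
        exact Finset.sum_nonneg fun i _ => sq_nonneg _
      have hEuB : Eu ≤ B := by
        rw [hEudef]
        have h1 : ∑ k, (A u (k) - A f k) ^ 2 ≤ ∑ _k : ZMod N × ZMod N, B :=
          Finset.sum_le_sum fun k _ => hgB u (hSM u u.2) k
        have h2 : ∑ _k : ZMod N × ZMod N, B = (N:ℝ)^2 * B := by
          rw [Finset.sum_const, Finset.card_univ, nsmul_eq_mul, hcard]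
        calc (1 / ((N : ℝ) ^ 2)) * ∑ k, (A u (k) - A f k) ^ 2
            ≤ (1 / ((N : ℝ) ^ 2)) * ((N:ℝ)^2 * B) := by
              apply mul_le_mul_of_nonneg_left _ (by positivity)
              rw [← h2]; exact h1
          _ = B := by field_simp
      have hsd : Real.sqrt ε ≤ Real.sqrt (Eu + ε) := Real.sqrt_le_sqrt (by linarith)
      have hsd0 : 0 < Real.sqrt (Eu + ε) := lt_of_lt_of_le hsqε hsd
      rcases le_or_gt (Eu - Ezu) 0 with hneg | hpos
      · calc (Eu - Ezu) / Real.sqrt (Eu + ε) ≤ 0 :=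
            div_nonpos_of_nonpos_of_nonneg hneg hsd0.le
          _ ≤ B / Real.sqrt ε := by positivity
      · exact div_le_div₀ hB.le (by linarith) hsqε hsd
    obtain ⟨u, hu⟩ := (lt_ciSup_iff hbdd).mp hz'
    obtain ⟨j, hj⟩ := hvcov u u.2
    refine ⟨j, ?_⟩
    -- notation
    set Eu : ℝ := (1 / ((N : ℝ) ^ 2)) * ∑ k, (A u (k) - A f k) ^ 2 with hEudef
    set Ezu : ℝ := (1 / (m : ℝ)) * ∑ i, (A u (z i) - A f (z i)) ^ 2 with hEzudef
    set Ev : ℝ := (1 / ((N : ℝ) ^ 2)) * ∑ k, g (v j) k with hEvdef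
    set Ezv : ℝ := (1 / (m : ℝ)) * ∑ i, g (v j) (z i) with hEzvdef
    have hEu0 : 0 ≤ Eu := by
      apply mul_nonneg (by positivity)
      exact Finset.sum_nonneg fun k _ => sq_nonneg _
    have hEv0 : 0 ≤ Ev := by
      apply mul_nonneg (by positivity)
      exact Finset.sum_nonneg fun k _ => hg0 _ _
    have hμ'E : μ' j = Ev := by
      rw [hμ'def, hEvdef, hcard]
      ring
    have hsd : Real.sqrt ε ≤ Real.sqrt (Eu + ε) := Real.sqrt_le_sqrt (by linarith)
    have hsd0 : 0 < Real.sqrt (Eu + ε) := lt_of_lt_of_le (Real.sqrt_pos.mpr hε) hsd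
    have hu' : 4 * γ * Real.sqrt ε * Real.sqrt (Eu + ε) < Eu - Ezu := by
      have := (lt_div_iff₀ hsd0).mp hu
      linarith
    -- Lipschitz comparisons
    have hcl : ∀ k, |g (↑u) k - g (v j) k| ≤ γ * ε :=
      hLip (↑u) (v j) (hSM u u.2) (hvIcc j) hj
    have havg : ∀ (s : Finset (ZMod N × ZMod N)) , |∑ k ∈ s, g (↑u) k - ∑ k ∈ s, g (v j) k|
        ≤ s.card * (γ * ε) := by
      intro s
      rw [← Finset.sum_sub_distrib]
      calc |∑ k ∈ s, (g (↑u) k - g (v j) k)| ≤ ∑ k ∈ s, |g (↑u) k - g (v j) k| :=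
            Finset.abs_sum_le_sum_abs _ _
        _ ≤ ∑ _k ∈ s, γ * ε := Finset.sum_le_sum fun k _ => hcl k
        _ = s.card * (γ * ε) := by rw [Finset.sum_const, nsmul_eq_mul]
    have hEd : |Eu - Ev| ≤ γ * ε := by
      rw [hEudef, hEvdef, ← mul_sub, abs_mul, abs_of_pos (show (0:ℝ) < 1/((N:ℝ)^2) by positivity)]
      have h1 := havg Finset.univ
      have h2 : ((Finset.univ : Finset (ZMod N × ZMod N)).card : ℝ) = (N:ℝ)^2 := by
        rw [Finset.card_univ]; exact hcard
      rw [h2] at h1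
      calc 1/((N:ℝ)^2) * |∑ k, g (↑u) k - ∑ k, g (v j) k|
          ≤ 1/((N:ℝ)^2) * ((N:ℝ)^2 * (γ * ε)) :=
            mul_le_mul_of_nonneg_left h1 (by positivity)
        _ = γ * ε := by field_simp
    have hEzd : |Ezu - Ezv| ≤ γ * ε := by
      rw [hEzudef, hEzvdef, ← mul_sub, abs_mul,
        abs_of_pos (show (0:ℝ) < 1/(m:ℝ) by positivity)]
      have h1 : |∑ i, g (↑u) (z i) - ∑ i, g (v j) (z i)| ≤ (m:ℝ) * (γ * ε) := by
        rw [← Finset.sum_sub_distrib]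
        calc |∑ i, (g (↑u) (z i) - g (v j) (z i))|
            ≤ ∑ i, |g (↑u) (z i) - g (v j) (z i)| := Finset.abs_sum_le_sum_abs _ _
          _ ≤ ∑ _i : Fin m, γ * ε := Finset.sum_le_sum fun i _ => hcl (z i)
          _ = (m:ℝ) * (γ * ε) := by
              rw [Finset.sum_const, Finset.card_univ, Fintype.card_fin, nsmul_eq_mul]
      calc 1/(m:ℝ) * |∑ i, g (↑u) (z i) - ∑ i, g (v j) (z i)|
          ≤ 1/(m:ℝ) * ((m:ℝ) * (γ * ε)) := mul_le_mul_of_nonneg_left h1 (by positivity)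
        _ = γ * ε := by
            have hm0 : (m:ℝ) ≠ 0 := by positivity
            field_simp
    -- key chain
    have hγε : γ * ε ≤ γ * Real.sqrt ε * Real.sqrt (Eu + ε) := by
      have h1 : γ * ε = γ * Real.sqrt ε * Real.sqrt ε := by
        rw [mul_assoc, Real.mul_self_sqrt hε.le]
      rw [h1]
      exact mul_le_mul_of_nonneg_left hsd (by positivity)
    have hnum : 2 * (γ * Real.sqrt ε * Real.sqrt (Eu + ε)) < Ev - Ezv := by
      have h1 := abs_le.mp hEd
      have h2 := abs_le.mp hEzd
      linarith [hu', hγε, h1.1, h1.2, h2.1, h2.2]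
    have hden : Real.sqrt (Ev + ε) ≤ 2 * Real.sqrt (Eu + ε) := by
      have h1 := abs_le.mp hEd
      have hγε' : γ * ε ≤ ε := by nlinarith
      have h4 : Ev + ε ≤ 4 * (Eu + ε) := by linarith [h1.1, h1.2, hγε', hEu0, hε.le]
      calc Real.sqrt (Ev + ε) ≤ Real.sqrt (4 * (Eu + ε)) := Real.sqrt_le_sqrt h4
        _ = 2 * Real.sqrt (Eu + ε) := by
            rw [show (4:ℝ) * (Eu + ε) = (2:ℝ)^2 * (Eu + ε) by ring,
              Real.sqrt_mul (by positivity), Real.sqrt_sq (by norm_num)]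
    show μ' j - (1/(m:ℝ)) * ∑ i, g (v j) (z i) > γ * Real.sqrt ε * Real.sqrt (μ' j + ε)
    rw [hμ'E]
    have hfin : γ * Real.sqrt ε * Real.sqrt (Ev + ε)
        ≤ 2 * (γ * Real.sqrt ε * Real.sqrt (Eu + ε)) := by
      calc γ * Real.sqrt ε * Real.sqrt (Ev + ε)
          ≤ γ * Real.sqrt ε * (2 * Real.sqrt (Eu + ε)) :=
            mul_le_mul_of_nonneg_left hden (by positivity)
        _ = 2 * (γ * Real.sqrt ε * Real.sqrt (Eu + ε)) := by ring
    show γ * Real.sqrt ε * Real.sqrt (Ev + ε) < Ev - (1/(m:ℝ)) * ∑ i, g (v j) (z i)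
    calc γ * Real.sqrt ε * Real.sqrt (Ev + ε)
        ≤ 2 * (γ * Real.sqrt ε * Real.sqrt (Eu + ε)) := hfin
      _ < Ev - Ezv := hnum
      _ = Ev - (1/(m:ℝ)) * ∑ i, g (v j) (z i) := by rw [hEzvdef]
  -- union bound and conclusion
  have hexp0 : (0:ℝ) ≤ Real.exp (-(3 * γ^2 * m * ε) / (8 * B)) := (Real.exp_pos _).le
  have hfinal := prob_union_le _ F hincl _ hexp0 hFbound
  have hbeq : Real.exp (-(3 * γ^2 * (m:ℝ) * ε) / (8 * B))
      = Real.exp (-(3 * γ ^ 2 * (m:ℝ) * ε) / (8 * ‖A‖ ^ 2 * M ^ 2)) := by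
    rw [hBdef]
    ring_nf
  rw [hbeq] at hfinal
  exact hfinal


end WFrame
end
end

section
/- Let J ≥ 0 be an integer, Ω_J = {0,…,2^J−1}², and let u : Ω_J → ℝ. Define the periodized function H : ℝ² → ℝ by H(x) = Σ_{m∈ℤ²} Σ_{k∈Ω_J} u[k]·φ(2^J(x+m) − k) (for each x this is a finite sum). Then ∫_{[0,1)²} H(x)² dx ≤ (n²/2^{2J}) · Σ_{k∈Ω_J} u[k]². -/
noncomputable section

open MeasureTheory

/-- cardinal B-spline of order n: B₁ = 1_{[0,1)}, B_n = B_{n−1} ∗ B₁ -/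
def Bsp : ℕ → ℝ → ℝ
  | 0 => fun _ => 0
  | 1 => Set.indicator (Set.Ico 0 1) 1
  | n + 2 => fun x => ∫ t : ℝ, Bsp (n + 1) t * Set.indicator (Set.Ico 0 1) 1 (x - t)

/-- tensor-product B-spline φ(x₁,x₂) = B_n(x₁)·B_n(x₂) -/
def phi2 (n : ℕ) (x : ℝ × ℝ) : ℝ := Bsp n x.1 * Bsp n x.2


lemma Bsp_succ_succ (n : ℕ) (x : ℝ) :
    Bsp (n+2) x = ∫ t : ℝ, Bsp (n + 1) t * Set.indicator (Set.Ico 0 1) 1 (x - t) := rfl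

lemma chi_nonneg (y : ℝ) : (0:ℝ) ≤ Set.indicator (Set.Ico (0:ℝ) 1) 1 y := by
  unfold Set.indicator; split_ifs <;> norm_num

lemma chi_le_one (y : ℝ) : (Set.indicator (Set.Ico (0:ℝ) 1) 1 y : ℝ) ≤ 1 := by
  unfold Set.indicator; split_ifs <;> norm_num

lemma Bsp_nonneg (n : ℕ) (x : ℝ) : 0 ≤ Bsp n x := by
  induction n using Nat.strong_induction_on generalizing x with
  | _ n ih =>
    match n with
    | 0 => simp [Bsp]
    | 1 => exact chi_nonneg x
    | (m+2) =>
      rw [Bsp_succ_succ]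
      exact integral_nonneg fun t => mul_nonneg (ih (m+1) (by omega) t) (chi_nonneg _)

lemma measurable_chi : Measurable (Set.indicator (Set.Ico (0:ℝ) 1) (1 : ℝ → ℝ)) :=
  (measurable_const (a := (1:ℝ))).indicator measurableSet_Ico

lemma measurable_Bsp (n : ℕ) : Measurable (Bsp n) := by
  induction n using Nat.strong_induction_on with
  | _ n ih =>
    match n with
    | 0 => simpa [Bsp] using measurable_const
    | 1 => exact measurable_chi
    | (m+2) =>
      have h : StronglyMeasurable (Function.uncurry fun (x t : ℝ) =>
          Bsp (m + 1) t * Set.indicator (Set.Ico 0 1) 1 (x - t)) := by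
        apply Measurable.stronglyMeasurable
        exact ((ih (m+1) (by omega)).comp measurable_snd).mul
          (measurable_chi.comp (measurable_fst.sub measurable_snd))
      have := h.integral_prod_right' (ν := (volume : Measure ℝ))
      exact this.measurable

lemma Bsp_eq_zero (n : ℕ) (x : ℝ) (h : x < 0 ∨ (n:ℝ) ≤ x) : Bsp n x = 0 := by
  induction n using Nat.strong_induction_on generalizing x with
  | _ n ih =>
    match n with
    | 0 => simp [Bsp]
    | 1 =>
      show Set.indicator (Set.Ico (0:ℝ) 1) 1 x = 0
      apply Set.indicator_of_notMem
      simp only [Set.mem_Ico, not_and_or, not_le, not_lt]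
      rcases h with h | h
      · exact Or.inl h
      · right; exact_mod_cast h
    | (m+2) =>
      rw [Bsp_succ_succ]
      rw [show (0:ℝ) = ∫ (_ : ℝ), (0:ℝ) by simp]
      apply integral_congr_ae
      filter_upwards with t
      rcases le_or_gt 0 t with ht | ht
      · rcases h with h | h
        · have : x - t < 0 := by linarith
          rw [Set.indicator_of_notMem (by simp [Set.mem_Ico]; intro h'; linarith)]
          ring
        · rcases lt_or_ge t (m+1 : ℝ) with ht2 | ht2
          · have : (1:ℝ) ≤ x - t := by push_cast at h ⊢; linarith
            rw [Set.indicator_of_notMem (by simp [Set.mem_Ico]; intro h'; linarith)]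
            ring
          · rw [ih (m+1) (by omega) t (Or.inr (by push_cast; linarith))]; ring
      · rw [ih (m+1) (by omega) t (Or.inl ht)]; ring

lemma Bsp_le_one (n : ℕ) (x : ℝ) : Bsp n x ≤ 1 := by
  induction n using Nat.strong_induction_on generalizing x with
  | _ n ih =>
    match n with
    | 0 => simp [Bsp]
    | 1 => exact chi_le_one x
    | (m+2) =>
      rw [Bsp_succ_succ]
      have hle : ∀ t : ℝ, Bsp (m+1) t * Set.indicator (Set.Ico (0:ℝ) 1) 1 (x - t)
          ≤ Set.indicator (Set.Ioc (x-1) x) 1 t := by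
        intro t
        by_cases hmem : x - t ∈ Set.Ico (0:ℝ) 1
        · rw [Set.indicator_of_mem hmem]
          have : t ∈ Set.Ioc (x-1) x := by
            simp only [Set.mem_Ico] at hmem; constructor <;> [linarith [hmem.2]; linarith [hmem.1]]
          rw [Set.indicator_of_mem this]
          simpa using ih (m+1) (by omega) t
        · rw [Set.indicator_of_notMem hmem]
          have h1 : (0:ℝ) ≤ Set.indicator (Set.Ioc (x-1) x) (1 : ℝ → ℝ) t := by
            unfold Set.indicator; split_ifs <;> norm_num
          simpa using h1
      calc (∫ t : ℝ, Bsp (m + 1) t * Set.indicator (Set.Ico 0 1) 1 (x - t))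
          ≤ ∫ t : ℝ, Set.indicator (Set.Ioc (x-1) x) 1 t := by
            apply integral_mono_of_nonneg
            · filter_upwards with t
              exact mul_nonneg (Bsp_nonneg _ _) (chi_nonneg _)
            · exact (integrable_indicator_iff measurableSet_Ioc).2
                (integrableOn_const (ne_of_lt (by simp [measure_Ioc_lt_top])))
            · filter_upwards with t using hle t
        _ = 1 := by
            rw [integral_indicator measurableSet_Ioc]
            simp [Real.volume_Ioc]

lemma Bsp_le_indicator (n : ℕ) (x : ℝ) :
    Bsp n x ≤ Set.indicator (Set.Ico (0:ℝ) n) 1 x := by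
  by_cases h : x ∈ Set.Ico (0:ℝ) n
  · rw [Set.indicator_of_mem h]; exact Bsp_le_one n x
  · rw [Set.indicator_of_notMem h]
    simp only [Set.mem_Ico, not_and_or, not_le, not_lt] at h
    rw [Bsp_eq_zero n x (by tauto)]

lemma integrable_Bsp (n : ℕ) : Integrable (Bsp n) := by
  apply Integrable.mono' (g := Set.indicator (Set.Ico (0:ℝ) n) 1)
  · exact (integrable_indicator_iff measurableSet_Ico).2
      (integrableOn_const (ne_of_lt (by simp [measure_Ico_lt_top])))
  · exact (measurable_Bsp n).aestronglyMeasurable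
  · filter_upwards with x
    rw [Real.norm_eq_abs, abs_of_nonneg (Bsp_nonneg n x)]
    exact Bsp_le_indicator n x

lemma integral_Bsp_le (n : ℕ) : ∫ x, Bsp n x ≤ 1 := by
  induction n using Nat.strong_induction_on with
  | _ n ih =>
    match n with
    | 0 => simp [Bsp]
    | 1 =>
      rw [show Bsp 1 = Set.indicator (Set.Ico (0:ℝ) 1) 1 from rfl,
        integral_indicator measurableSet_Ico]
      simp [Real.volume_Ico]
    | (m+2) =>
      have hInt : Integrable (Function.uncurry fun (x t : ℝ) =>
          Bsp (m + 1) t * Set.indicator (Set.Ico 0 1) 1 (x - t))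
          (volume : Measure (ℝ × ℝ)) := by
        apply Integrable.mono' (g := Set.indicator
          (Set.Ico (0:ℝ) (m+2) ×ˢ Set.Ico (0:ℝ) (m+1)) 1)
        · exact (integrable_indicator_iff (measurableSet_Ico.prod measurableSet_Ico)).2
            (integrableOn_const (ne_of_lt (by
              rw [Measure.volume_eq_prod, Measure.prod_prod]
              exact ENNReal.mul_lt_top (measure_Ico_lt_top) (measure_Ico_lt_top))))
        · exact (((measurable_Bsp (m+1)).comp measurable_snd).mul
            (measurable_chi.comp (measurable_fst.sub measurable_snd))).aestronglyMeasurable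
        · filter_upwards with p
          simp only [Function.uncurry]
          rw [Real.norm_eq_abs, abs_of_nonneg (mul_nonneg (Bsp_nonneg _ _) (chi_nonneg _))]
          by_cases hp : p ∈ Set.Ico (0:ℝ) (m+2) ×ˢ Set.Ico (0:ℝ) (m+1)
          · rw [Set.indicator_of_mem hp]
            simp only [Function.uncurry, Pi.one_apply]
            calc Bsp (m+1) p.2 * Set.indicator (Set.Ico 0 1) 1 (p.1 - p.2)
                ≤ 1 * 1 := mul_le_mul (Bsp_le_one _ _) (chi_le_one _)
                    (chi_nonneg _) zero_le_one
              _ = 1 := by ring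
          · rw [Set.indicator_of_notMem hp]
            simp only [Set.mem_prod, Set.mem_Ico, not_and_or] at hp
            -- show the product is zero
            rcases lt_or_ge p.2 0 with h2 | h2
            · rw [Bsp_eq_zero _ _ (Or.inl h2)]; simp
            rcases le_or_gt ((m:ℝ)+1) p.2 with h3 | h3
            · rw [Bsp_eq_zero _ _ (Or.inr (by push_cast; linarith))]; simp
            -- p.2 ∈ [0, m+1); so p.1 ∉ [0,m+2) forces χ(p.1-p.2)=0
            have h4 : p.1 - p.2 ∉ Set.Ico (0:ℝ) 1 := by
              simp only [Set.mem_Ico, not_and_or, not_le, not_lt]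
              rcases hp with (hp | hp) | hp
              · left; linarith
              · right; push_cast at hp; linarith
              · exfalso; rcases hp with hp | hp
                · exact hp h2
                · exact hp (by push_cast; linarith)
            rw [Set.indicator_of_notMem h4]; simp
      calc ∫ x, Bsp (m+2) x
          = ∫ x, ∫ t, Bsp (m + 1) t * Set.indicator (Set.Ico 0 1) 1 (x - t) := rfl
        _ = ∫ t, ∫ x, Bsp (m + 1) t * Set.indicator (Set.Ico 0 1) 1 (x - t) :=
            integral_integral_swap hInt
        _ = ∫ t, Bsp (m + 1) t := by
            apply integral_congr_ae; filter_upwards with t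
            rw [integral_const_mul]
            have : (∫ x : ℝ, (Set.indicator (Set.Ico (0:ℝ) 1) 1 (x - t) : ℝ)) = 1 := by
              rw [integral_sub_right_eq_self (fun y : ℝ => (Set.indicator (Set.Ico (0:ℝ) 1) 1 y : ℝ)) t,
                integral_indicator measurableSet_Ico]
              simp [Real.volume_Ico]
            rw [this, mul_one]
        _ ≤ 1 := ih (m+1) (by omega)

lemma shift_eval (n : ℕ) (c d : ℝ) (hc : 0 < c) :
    ∫ x in Set.Ico (0:ℝ) 1, Bsp n (c*x + d) =
      c⁻¹ * ∫ y in Set.Ico d (d+c), Bsp n y := by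
  rw [← integral_indicator measurableSet_Ico]
  have key : ∀ x : ℝ, (Set.Ico (0:ℝ) 1).indicator (fun x => Bsp n (c*x + d)) x
      = (Set.Ico d (d+c)).indicator (Bsp n) (c*(x + d/c)) := by
    intro x
    have harg : c*(x + d/c) = c*x + d := by field_simp
    rw [harg]
    by_cases h : x ∈ Set.Ico (0:ℝ) 1
    · rw [Set.indicator_of_mem h, Set.indicator_of_mem]
      simp only [Set.mem_Ico] at h ⊢
      constructor
      · nlinarith [h.1]
      · nlinarith [h.2]
    · rw [Set.indicator_of_notMem h, Set.indicator_of_notMem]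
      simp only [Set.mem_Ico, not_and_or, not_le, not_lt] at h ⊢
      rcases h with h | h
      · left; nlinarith
      · right; nlinarith
  simp_rw [key]
  rw [integral_add_right_eq_self (fun x => (Set.Ico d (d+c)).indicator (Bsp n) (c*x)) (d/c)]
  rw [MeasureTheory.Measure.integral_comp_mul_left ((Set.Ico d (d+c)).indicator (Bsp n)) c]
  rw [integral_indicator measurableSet_Ico, abs_of_pos (inv_pos.2 hc), smul_eq_mul]

lemma sum_shift_le (n : ℕ) (c k : ℝ) (hc : 0 < c) (M : Finset ℤ) :
    (∑ m ∈ M, ∫ x in Set.Ico (0:ℝ) 1, Bsp n (c*(x+(m:ℝ)) - k)) ≤ c⁻¹ := by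
  have heval : ∀ m : ℤ, (∫ x in Set.Ico (0:ℝ) 1, Bsp n (c*(x+(m:ℝ)) - k))
      = c⁻¹ * ∫ y in Set.Ico (c*m - k) (c*m - k + c), Bsp n y := by
    intro m
    rw [← shift_eval n c (c*m - k) hc]
    apply setIntegral_congr_fun measurableSet_Ico
    intro x _; congr 1; ring
  simp_rw [heval]
  rw [← Finset.mul_sum]
  have hdisj : (M : Set ℤ).Pairwise
      (Function.onFun Disjoint (fun m : ℤ => Set.Ico (c*m - k) (c*m - k + c))) := by
    intro a _ b _ hab
    simp only [Function.onFun, Set.Ico_disjoint_Ico]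
    rcases lt_or_gt_of_ne hab with h | h
    · have : (a:ℝ) + 1 ≤ b := by exact_mod_cast h
      have := hc
      refine le_trans (min_le_left _ _) (le_max_of_le_right ?_)
      nlinarith
    · have : (b:ℝ) + 1 ≤ a := by exact_mod_cast h
      refine le_trans (min_le_right _ _) (le_max_of_le_left ?_)
      nlinarith
  calc c⁻¹ * ∑ m ∈ M, ∫ y in Set.Ico (c*m - k) (c*m - k + c), Bsp n y
      = c⁻¹ * ∫ y in ⋃ m ∈ M, Set.Ico (c*(m:ℝ) - k) (c*m - k + c), Bsp n y := by
        rw [integral_biUnion_finset M (fun _ _ => measurableSet_Ico) hdisj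
          (fun _ _ => (integrable_Bsp n).integrableOn)]
    _ ≤ c⁻¹ * ∫ y, Bsp n y := by
        apply mul_le_mul_of_nonneg_left _ (inv_nonneg.2 hc.le)
        exact setIntegral_le_integral (integrable_Bsp n)
          (Filter.Eventually.of_forall (Bsp_nonneg n))
    _ ≤ c⁻¹ * 1 := mul_le_mul_of_nonneg_left (integral_Bsp_le n) (inv_nonneg.2 hc.le)
    _ = c⁻¹ := mul_one _

lemma phi2_nonneg (n : ℕ) (y : ℝ × ℝ) : 0 ≤ phi2 n y :=
  mul_nonneg (Bsp_nonneg _ _) (Bsp_nonneg _ _)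

lemma phi2_le_one (n : ℕ) (y : ℝ × ℝ) : phi2 n y ≤ 1 :=
  mul_le_one₀ (Bsp_le_one _ _) (Bsp_nonneg _ _) (Bsp_le_one _ _)

lemma fin_uniq (N : ℕ) (m m' : ℤ) (k k' : Fin N)
    (h : (k:ℤ) - N*m = (k':ℤ) - N*m') : m = m' ∧ k = k' := by
  have hk : (k:ℤ) < N := by exact_mod_cast k.2
  have hk' : (k':ℤ) < N := by exact_mod_cast k'.2
  have h0 : (0:ℤ) ≤ (k:ℤ) := Int.ofNat_nonneg _
  have h0' : (0:ℤ) ≤ (k':ℤ) := Int.ofNat_nonneg _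
  have hm : m = m' := by
    rcases lt_trichotomy m m' with hlt | heq | hgt
    · exfalso; have : m + 1 ≤ m' := hlt; nlinarith
    · exact heq
    · exfalso; have : m' + 1 ≤ m := hgt; nlinarith
  subst hm
  refine ⟨rfl, ?_⟩
  have : (k:ℤ) = (k':ℤ) := by linarith
  exact Fin.ext (by exact_mod_cast this)

lemma Bsp_mem_of_ne_zero {n : ℕ} {x : ℝ} (h : Bsp n x ≠ 0) : 0 ≤ x ∧ x < n := by
  by_contra hc
  rw [not_and_or, not_le, not_lt] at hc
  exact h (Bsp_eq_zero n x hc)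

lemma pointwise_bound (n : ℕ) (hn : 1 ≤ n) (J : ℕ) (u : Fin (2^J) × Fin (2^J) → ℝ)
    (x : ℝ × ℝ) (hx : x ∈ Set.Ico (0:ℝ) 1 ×ˢ Set.Ico (0:ℝ) 1) :
    (∑' m : ℤ × ℤ, ∑ k : Fin (2 ^ J) × Fin (2 ^ J),
          u k * phi2 n (2 ^ J * (x.1 + (m.1 : ℝ)) - (k.1 : ℝ),
                        2 ^ J * (x.2 + (m.2 : ℝ)) - (k.2 : ℝ))) ^ 2 ≤
    (n:ℝ)^2 * ∑ p ∈ (Finset.Icc (0:ℤ) n ×ˢ Finset.Icc (0:ℤ) n) ×ˢ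
        (Finset.univ : Finset (Fin (2 ^ J) × Fin (2 ^ J))),
        (u p.2)^2 * phi2 n (2 ^ J * (x.1 + (p.1.1 : ℝ)) - (p.2.1 : ℝ),
                            2 ^ J * (x.2 + (p.1.2 : ℝ)) - (p.2.2 : ℝ)) := by
  obtain ⟨hx1, hx2⟩ := hx
  simp only [Set.mem_Ico] at hx1 hx2
  set c : ℝ := (2:ℝ)^J with hc
  have hc1 : (1:ℝ) ≤ c := one_le_pow₀ (by norm_num)
  have hcN : ((2^J : ℕ) : ℝ) = c := by push_cast; rfl
  set g : (ℤ × ℤ) × (Fin (2^J) × Fin (2^J)) → ℝ := fun p =>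
    u p.2 * phi2 n (c * (x.1 + (p.1.1 : ℝ)) - (p.2.1 : ℝ),
                    c * (x.2 + (p.1.2 : ℝ)) - (p.2.2 : ℝ)) with hg
  -- support bound for the tsum
  have hsupp : ∀ m : ℤ × ℤ, m ∉ (Finset.Icc (0:ℤ) n ×ˢ Finset.Icc (0:ℤ) n) →
      (∑ k : Fin (2 ^ J) × Fin (2 ^ J), g (m, k)) = 0 := by
    intro m hm
    apply Finset.sum_eq_zero
    intro k _
    have hB : ∀ (mi : ℤ) (xi : ℝ) (ki : Fin (2^J)), 0 ≤ xi → xi < 1 →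
        mi ∉ Finset.Icc (0:ℤ) (n:ℤ) → Bsp n (c * (xi + (mi:ℝ)) - (ki:ℝ)) = 0 := by
      intro mi xi ki hxi0 hxi1 hmi
      simp only [Finset.mem_Icc, not_and_or, not_le] at hmi
      have hki0 : (0:ℝ) ≤ (ki:ℝ) := by positivity
      have hki1 : (ki:ℝ) ≤ c - 1 := by
        have : (ki : ℕ) < 2^J := ki.2
        have : ((ki:ℕ):ℝ) ≤ ((2^J : ℕ):ℝ) - 1 := by
          have h' : (ki:ℕ) + 1 ≤ 2^J := this
          have := Nat.cast_le (α := ℝ) |>.2 h'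
          push_cast at this ⊢; linarith
        rw [hcN] at this; exact this
      rcases hmi with hmi | hmi
      · apply Bsp_eq_zero _ _ (Or.inl ?_)
        have : (mi:ℝ) ≤ -1 := by exact_mod_cast Int.le_sub_one_of_lt hmi
        nlinarith
      · apply Bsp_eq_zero _ _ (Or.inr ?_)
        have : ((n:ℝ)) + 1 ≤ (mi:ℝ) := by exact_mod_cast hmi
        nlinarith
    rw [Finset.mem_product, not_and_or] at hm
    rcases hm with hm1 | hm1
    · have := hB m.1 x.1 k.1 hx1.1 hx1.2 hm1
      simp only [hg, phi2, this, zero_mul, mul_zero]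
    · have := hB m.2 x.2 k.2 hx2.1 hx2.2 hm1
      simp only [hg, phi2, this, zero_mul, mul_zero]
  have htsum : (∑' m : ℤ × ℤ, ∑ k : Fin (2 ^ J) × Fin (2 ^ J), g (m, k))
      = ∑ m ∈ (Finset.Icc (0:ℤ) n ×ˢ Finset.Icc (0:ℤ) n),
          ∑ k : Fin (2 ^ J) × Fin (2 ^ J), g (m, k) :=
    tsum_eq_sum hsupp
  have hpack : (∑ m ∈ (Finset.Icc (0:ℤ) n ×ˢ Finset.Icc (0:ℤ) n),
        ∑ k : Fin (2 ^ J) × Fin (2 ^ J), g (m, k))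
      = ∑ p ∈ (Finset.Icc (0:ℤ) n ×ˢ Finset.Icc (0:ℤ) n) ×ˢ Finset.univ, g p :=
    (Finset.sum_product _ _ _).symm
  set P := (Finset.Icc (0:ℤ) n ×ˢ Finset.Icc (0:ℤ) n) ×ˢ
      (Finset.univ : Finset (Fin (2 ^ J) × Fin (2 ^ J))) with hP
  set T := P.filter (fun p => g p ≠ 0) with hT
  have hTsum : ∑ p ∈ T, g p = ∑ p ∈ P, g p := Finset.sum_filter_ne_zero P
  -- card bound
  have hcard : T.card ≤ n * n := by
    set B := Finset.Icc (⌊c * x.1⌋ - n + 1) ⌊c * x.1⌋ ×ˢ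
        Finset.Icc (⌊c * x.2⌋ - n + 1) ⌊c * x.2⌋ with hB
    have hmap : ∀ p ∈ T, (((p.2.1 : ℤ) - (2^J : ℕ) * p.1.1),
        ((p.2.2 : ℤ) - (2^J : ℕ) * p.1.2)) ∈ B := by
      intro p hp
      have hgp : g p ≠ 0 := (Finset.mem_filter.1 hp).2
      have hphi : phi2 n (c * (x.1 + (p.1.1 : ℝ)) - (p.2.1 : ℝ),
          c * (x.2 + (p.1.2 : ℝ)) - (p.2.2 : ℝ)) ≠ 0 := by
        intro h0; exact hgp (by simp [hg, h0])
      rw [phi2] at hphi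
      obtain ⟨hphi1, hphi2⟩ := mul_ne_zero_iff.1 hphi
      have h1 := Bsp_mem_of_ne_zero hphi1
      have h2 := Bsp_mem_of_ne_zero hphi2
      have key : ∀ (mi : ℤ) (ki : Fin (2^J)) (xi : ℝ),
          0 ≤ c * (xi + (mi:ℝ)) - (ki:ℝ) → c * (xi + (mi:ℝ)) - (ki:ℝ) < n →
          (ki:ℤ) - (2^J : ℕ) * mi ∈ Finset.Icc (⌊c * xi⌋ - n + 1) ⌊c * xi⌋ := by
        intro mi ki xi hlo hhi
        have hcast : (((ki:ℤ) - (2^J : ℕ) * mi : ℤ) : ℝ) = (ki:ℝ) - c * (mi:ℝ) := by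
          push_cast [hcN]; ring
        rw [Finset.mem_Icc]
        constructor
        · have : c * xi < ((ki:ℤ) - (2^J : ℕ) * mi : ℤ) + n := by
            rw [hcast]; push_cast; nlinarith
          have := Int.floor_lt.2 (by exact_mod_cast this)
          omega
        · apply Int.le_floor.2
          rw [hcast]; nlinarith
      exact Finset.mk_mem_product
        (key p.1.1 p.2.1 x.1 h1.1 h1.2) (key p.1.2 p.2.2 x.2 h2.1 h2.2)
    have hinj : Set.InjOn (fun p : (ℤ × ℤ) × (Fin (2^J) × Fin (2^J)) =>
        (((p.2.1 : ℤ) - (2^J : ℕ) * p.1.1), ((p.2.2 : ℤ) - (2^J : ℕ) * p.1.2))) T := by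
      intro p _ q _ hpq
      have e1 := congrArg Prod.fst hpq
      have e2 := congrArg Prod.snd hpq
      simp only at e1 e2
      obtain ⟨hm1, hk1⟩ := fin_uniq (2^J) p.1.1 q.1.1 p.2.1 q.2.1 e1
      obtain ⟨hm2, hk2⟩ := fin_uniq (2^J) p.1.2 q.1.2 p.2.2 q.2.2 e2
      exact Prod.ext (Prod.ext hm1 hm2) (Prod.ext hk1 hk2)
    have := Finset.card_le_card_of_injOn _ hmap hinj
    have hBcard : B.card = n * n := by
      rw [hB, Finset.card_product, Int.card_Icc, Int.card_Icc]
      have : ∀ a : ℤ, (a + 1 - (a - n + 1)).toNat = n := by intro a; omega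
      rw [this, this]
    omega
  -- Cauchy-Schwarz
  calc (∑' m : ℤ × ℤ, ∑ k : Fin (2 ^ J) × Fin (2 ^ J), g (m, k)) ^ 2
      = (∑ p ∈ T, g p) ^ 2 := by rw [htsum, hpack, hTsum]
    _ ≤ (T.card : ℝ) * ∑ p ∈ T, g p ^ 2 := sq_sum_le_card_mul_sum_sq
    _ ≤ (n:ℝ)^2 * ∑ p ∈ T, g p ^ 2 := by
        apply mul_le_mul_of_nonneg_right _ (Finset.sum_nonneg fun p _ => sq_nonneg _)
        calc (T.card : ℝ) ≤ ((n*n : ℕ) : ℝ) := by exact_mod_cast hcard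
          _ = (n:ℝ)^2 := by push_cast; ring
    _ ≤ (n:ℝ)^2 * ∑ p ∈ P, (u p.2)^2 * phi2 n (c * (x.1 + (p.1.1 : ℝ)) - (p.2.1 : ℝ),
          c * (x.2 + (p.1.2 : ℝ)) - (p.2.2 : ℝ)) := by
        apply mul_le_mul_of_nonneg_left _ (sq_nonneg _)
        calc ∑ p ∈ T, g p ^ 2
            ≤ ∑ p ∈ T, (u p.2)^2 * phi2 n (c * (x.1 + (p.1.1 : ℝ)) - (p.2.1 : ℝ),
                c * (x.2 + (p.1.2 : ℝ)) - (p.2.2 : ℝ)) := by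
              apply Finset.sum_le_sum
              intro p _
              rw [hg, mul_pow]
              apply mul_le_mul_of_nonneg_left _ (sq_nonneg _)
              calc (phi2 n _)^2 ≤ 1 * phi2 n _ := by
                    rw [sq]
                    exact mul_le_mul_of_nonneg_right (phi2_le_one _ _) (phi2_nonneg _ _)
                _ = phi2 n _ := one_mul _
          _ ≤ ∑ p ∈ P, (u p.2)^2 * phi2 n (c * (x.1 + (p.1.1 : ℝ)) - (p.2.1 : ℝ),
                c * (x.2 + (p.1.2 : ℝ)) - (p.2.2 : ℝ)) := by
              apply Finset.sum_le_sum_of_subset_of_nonneg (Finset.filter_subset _ _)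
              intro p _ _
              exact mul_nonneg (sq_nonneg _) (phi2_nonneg _ _)

/-- adjoint Bessel-type inequality: for u : Ω_J → ℝ and the periodized
synthesis H(x) = Σ_{m∈ℤ²}Σ_{k∈Ω_J} u[k]φ(2^J(x+m)−k),
∫_{[0,1)²} H² ≤ (n²/2^{2J})·Σ_k u[k]². -/
theorem stmt9 (n : ℕ) (hn : 1 ≤ n) (J : ℕ) (u : Fin (2 ^ J) × Fin (2 ^ J) → ℝ) :
    ∫ x in Set.Ico (0:ℝ) 1 ×ˢ Set.Ico (0:ℝ) 1,
        (∑' m : ℤ × ℤ, ∑ k : Fin (2 ^ J) × Fin (2 ^ J),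
          u k * phi2 n (2 ^ J * (x.1 + (m.1 : ℝ)) - (k.1 : ℝ),
                        2 ^ J * (x.2 + (m.2 : ℝ)) - (k.2 : ℝ))) ^ 2 ≤
      ((n : ℝ) ^ 2 / 2 ^ (2 * J)) * ∑ k, u k ^ 2 := by
  set c : ℝ := (2:ℝ)^J with hc
  have hc0 : (0:ℝ) < c := by positivity
  set sq := Set.Ico (0:ℝ) 1 ×ˢ Set.Ico (0:ℝ) 1 with hsqdef
  have hsq : MeasurableSet sq := measurableSet_Ico.prod measurableSet_Ico
  have hvol : volume sq < ⊤ := by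
    rw [hsqdef, Measure.volume_eq_prod, Measure.prod_prod]
    exact ENNReal.mul_lt_top measure_Ico_lt_top measure_Ico_lt_top
  set P := (Finset.Icc (0:ℤ) n ×ˢ Finset.Icc (0:ℤ) n) ×ˢ
      (Finset.univ : Finset (Fin (2 ^ J) × Fin (2 ^ J))) with hP
  set term : (ℤ × ℤ) × (Fin (2^J) × Fin (2^J)) → ℝ × ℝ → ℝ := fun p x =>
      (u p.2)^2 * phi2 n (c * (x.1 + (p.1.1 : ℝ)) - (p.2.1 : ℝ),
                          c * (x.2 + (p.1.2 : ℝ)) - (p.2.2 : ℝ)) with hterm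
  have hmeas : ∀ p, Measurable (term p) := by
    intro p
    apply Measurable.const_mul
    exact ((measurable_Bsp n).comp
        (((measurable_fst.add_const _).const_mul c).sub_const _)).mul
      ((measurable_Bsp n).comp (((measurable_snd.add_const _).const_mul c).sub_const _))
  have hint : ∀ p, IntegrableOn (term p) sq := by
    intro p
    apply Integrable.mono' (g := fun _ => (u p.2)^2 * 1)
    · exact integrableOn_const (C := (u p.2)^2 * 1) hvol.ne
    · exact (hmeas p).aestronglyMeasurable
    · filter_upwards with y
      rw [hterm, Real.norm_eq_abs, abs_of_nonneg (mul_nonneg (sq_nonneg _) (phi2_nonneg _ _))]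
      exact mul_le_mul_of_nonneg_left (phi2_le_one _ _) (sq_nonneg _)
  set G : ℝ × ℝ → ℝ := fun x => (n:ℝ)^2 * ∑ p ∈ P, term p x with hG
  have hGint : IntegrableOn G sq := ((integrable_finset_sum P (fun p _ => hint p)).const_mul _)
  have step1 : (∫ x in sq,
        (∑' m : ℤ × ℤ, ∑ k : Fin (2 ^ J) × Fin (2 ^ J),
          u k * phi2 n (c * (x.1 + (m.1 : ℝ)) - (k.1 : ℝ),
                        c * (x.2 + (m.2 : ℝ)) - (k.2 : ℝ))) ^ 2) ≤ ∫ x in sq, G x := by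
    apply integral_mono_of_nonneg
    · filter_upwards with y using sq_nonneg _
    · exact hGint
    · apply ae_restrict_of_forall_mem hsq
      intro y hy
      exact pointwise_bound n hn J u y hy
  refine le_trans step1 ?_
  -- compute/bound ∫ G
  have hfactor : ∀ p ∈ P, (∫ x in sq, term p x)
      = (u p.2)^2 * ((∫ x in Set.Ico (0:ℝ) 1, Bsp n (c * (x + (p.1.1 : ℝ)) - (p.2.1 : ℝ)))
        * (∫ x in Set.Ico (0:ℝ) 1, Bsp n (c * (x + (p.1.2 : ℝ)) - (p.2.2 : ℝ)))) := by
    intro p _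
    rw [hterm]
    simp only [phi2]
    rw [integral_const_mul, hsqdef, Measure.volume_eq_prod]
    congr 1
    exact setIntegral_prod_mul (fun a => Bsp n (c * (a + (p.1.1 : ℝ)) - (p.2.1 : ℝ)))
      (fun a => Bsp n (c * (a + (p.1.2 : ℝ)) - (p.2.2 : ℝ))) _ _
  have hI_nonneg : ∀ (m : ℤ) (k : ℝ),
      0 ≤ ∫ x in Set.Ico (0:ℝ) 1, Bsp n (c * (x + (m:ℝ)) - k) :=
    fun m k => setIntegral_nonneg measurableSet_Ico (fun x _ => Bsp_nonneg _ _)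
  have hsum : (∑ p ∈ P, ∫ x in sq, term p x) ≤ c⁻¹ * c⁻¹ * ∑ k, u k ^ 2 := by
    rw [Finset.sum_congr rfl hfactor, hP, Finset.sum_product]
    rw [Finset.sum_comm]
    calc ∑ k : Fin (2^J) × Fin (2^J), ∑ m ∈ Finset.Icc (0:ℤ) n ×ˢ Finset.Icc (0:ℤ) n,
          (u k)^2 * ((∫ x in Set.Ico (0:ℝ) 1, Bsp n (c * (x + (m.1 : ℝ)) - (k.1 : ℝ)))
            * (∫ x in Set.Ico (0:ℝ) 1, Bsp n (c * (x + (m.2 : ℝ)) - (k.2 : ℝ))))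
        = ∑ k : Fin (2^J) × Fin (2^J), (u k)^2 *
            ((∑ m1 ∈ Finset.Icc (0:ℤ) n, ∫ x in Set.Ico (0:ℝ) 1,
                Bsp n (c * (x + (m1 : ℝ)) - (k.1 : ℝ)))
            * (∑ m2 ∈ Finset.Icc (0:ℤ) n, ∫ x in Set.Ico (0:ℝ) 1,
                Bsp n (c * (x + (m2 : ℝ)) - (k.2 : ℝ)))) := by
          apply Finset.sum_congr rfl
          intro k _
          rw [← Finset.mul_sum, Finset.sum_product, Finset.sum_mul_sum]
      _ ≤ ∑ k : Fin (2^J) × Fin (2^J), (u k)^2 * (c⁻¹ * c⁻¹) := by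
          apply Finset.sum_le_sum
          intro k _
          apply mul_le_mul_of_nonneg_left _ (sq_nonneg _)
          have h1 := sum_shift_le n c ((k.1 : ℕ) : ℝ) hc0 (Finset.Icc (0:ℤ) n)
          have h2 := sum_shift_le n c ((k.2 : ℕ) : ℝ) hc0 (Finset.Icc (0:ℤ) n)
          exact mul_le_mul h1 h2 (Finset.sum_nonneg fun m _ => hI_nonneg m _)
            (le_trans (Finset.sum_nonneg fun m _ => hI_nonneg m _) h1)
      _ = c⁻¹ * c⁻¹ * ∑ k, u k ^ 2 := by
          rw [← Finset.sum_mul]; ring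
  calc ∫ x in sq, G x
      = (n:ℝ)^2 * ∑ p ∈ P, ∫ x in sq, term p x := by
        rw [hG, integral_const_mul, integral_finset_sum P (fun p _ => hint p)]
    _ ≤ (n:ℝ)^2 * (c⁻¹ * c⁻¹ * ∑ k, u k ^ 2) :=
        mul_le_mul_of_nonneg_left hsum (sq_nonneg _)
    _ = ((n : ℝ) ^ 2 / 2 ^ (2 * J)) * ∑ k, u k ^ 2 := by
        rw [hc, two_mul, pow_add]
        field_simp
end
end

section
/- Let M > 0, T ≥ 0 and t > 0, and let M̃ = { u : Ω → ℝ : ‖u‖_{ℓ∞(Ω)} ≤ M and ‖∇u‖₁ ≤ T }. Set R = 2N(N−1) (the number of entries of the discrete gradient), K = ⌈2T/t⌉ and κ = ⌈2M/t⌉. Then there exist points v₁,…,v_P ∈ ℝ^Ω with P ≤ (4κ+2)·(2(R+K−1))^K such that every u ∈ M̃ satisfies ‖u − v_j‖_{ℓ∞(Ω)} ≤ t for some j ≤ P. -/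
noncomputable section

/-- discrete total variation (no wrap-around) on the grid {0,…,N−1}² ≃ (ℤ/Nℤ)² -/
def tv (N : ℕ) [NeZero N] (u : ZMod N × ZMod N → ℝ) : ℝ :=
  (∑ i ∈ Finset.range (N - 1), ∑ j ∈ Finset.range N,
      |u ((i : ZMod N) + 1, (j : ZMod N)) - u ((i : ZMod N), (j : ZMod N))|) +
  (∑ i ∈ Finset.range N, ∑ j ∈ Finset.range (N - 1),
      |u ((i : ZMod N), (j : ZMod N) + 1) - u ((i : ZMod N), (j : ZMod N))|)

set_option maxHeartbeats 1000000 in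

open Finset in
lemma exists_g (L K : ℕ) (e : ℕ → ℕ) (hS : ∑ j ∈ Finset.range L, e j ≤ K) :
    ∃ g : Fin K → Fin (L+1), ∀ i < L,
      (Finset.univ.filter (fun j => (g j : ℕ) = i)).card = e i := by
  set S : ℕ → ℕ := fun r => ∑ j ∈ Finset.range r, e j with hSdef
  have hSmono : Monotone S := by
    intro a b hab
    exact Finset.sum_le_sum_of_subset (Finset.range_subset_range.2 hab)
  have hgvle : ∀ j : ℕ, ((Finset.range L).filter (fun i => S (i+1) ≤ j)).card ≤ L := by
    intro j
    exact le_trans (Finset.card_filter_le _ _) (by simp)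
  set gv : ℕ → ℕ := fun j => ((Finset.range L).filter (fun i => S (i+1) ≤ j)).card with hgv
  have claim : ∀ j i, i < L → (gv j = i ↔ S i ≤ j ∧ j < S (i+1)) := by
    intro j i hiL
    constructor
    · intro hgj
      by_contra hc
      push_neg at hc
      rcases Nat.lt_or_ge j (S i) with h1 | h1
      · -- filter ⊆ range (i-1), card < i
        have hi1 : 1 ≤ i := by
          by_contra hi0
          push_neg at hi0
          interval_cases i
          simp [hSdef] at h1
        have hsub : (Finset.range L).filter (fun i' => S (i'+1) ≤ j) ⊆ Finset.range (i-1) := by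
          intro i' hi'
          simp only [Finset.mem_filter, Finset.mem_range] at hi' ⊢
          have : S (i'+1) < S i := lt_of_le_of_lt hi'.2 h1
          have : i' + 1 < i := by
            by_contra hle
            push_neg at hle
            exact absurd (hSmono hle) (not_le.2 this)
          omega
        have h3 : gv j ≤ i - 1 := le_trans (Finset.card_le_card hsub) (by simp)
        omega
      · have h2 := hc h1
        have hsub : Finset.range (i+1) ⊆ (Finset.range L).filter (fun i' => S (i'+1) ≤ j) := by
          intro i' hi'
          simp only [Finset.mem_range] at hi'
          simp only [Finset.mem_filter, Finset.mem_range]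
          exact ⟨by omega, le_trans (hSmono (by omega)) h2⟩
        have h3 : i + 1 ≤ gv j := le_trans (by simp) (Finset.card_le_card hsub)
        omega
    · rintro ⟨h1, h2⟩
      have : (Finset.range L).filter (fun i' => S (i'+1) ≤ j) = Finset.range i := by
        ext i'
        simp only [Finset.mem_filter, Finset.mem_range]
        constructor
        · rintro ⟨_, hle⟩
          by_contra hge
          push_neg at hge
          exact absurd (le_trans (hSmono (by omega : i + 1 ≤ i' + 1)) hle) (not_le.2 h2)
        · intro hlt
          exact ⟨by omega, le_trans (hSmono (by omega : i' + 1 ≤ i)) h1⟩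
      rw [hgv]
      simp only
      rw [this, Finset.card_range]
  refine ⟨fun j => ⟨gv j, Nat.lt_succ_of_le (hgvle j)⟩, ?_⟩
  intro i hiL
  have hSi1K : S (i+1) ≤ K := le_trans (hSmono (by omega)) hS
  have hcard : (Finset.univ.filter (fun j : Fin K => gv (j : ℕ) = i)).card
      = (Finset.Ico (S i) (S (i+1))).card := by
    rw [Finset.card_filter,
      Fin.sum_univ_eq_sum_range (fun j => if gv j = i then 1 else 0) K,
      ← Finset.card_filter]
    congr 1
    ext j
    simp only [Finset.mem_filter, Finset.mem_range, Finset.mem_Ico]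
    constructor
    · rintro ⟨hjK, hgj⟩
      exact (claim _ _ hiL).1 hgj
    · intro hm
      exact ⟨lt_of_lt_of_le hm.2 hSi1K, (claim _ _ hiL).2 hm⟩
  simpa [Nat.card_Ico, hSdef, Finset.sum_range_succ] using hcard

set_option maxHeartbeats 1000000 in

lemma quant1D (t M T : ℝ) (ht : 0 < t) (hM0 : 0 < M) (hT : 0 ≤ T) (R' : ℕ) (s : ℕ → ℝ)
    (hs0 : |s 0| ≤ M)
    (hTV : ∑ i ∈ Finset.range R', |s (i+1) - s i| ≤ T) :
    ∃ n : Fin (4 * ⌈2*M/t⌉₊ + 2), ∃ c d : ℕ → ℕ,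
      (∑ i ∈ Finset.range R', (c i + d i)) ≤ ⌈2*T/t⌉₊ ∧
      ∀ m ≤ R', |s m - (t * (((n : ℕ) : ℝ) - 2 * (⌈2*M/t⌉₊ : ℝ)) +
        (t/2) * ((∑ i ∈ Finset.range m, (c i:ℝ)) - ∑ i ∈ Finset.range m, (d i:ℝ)))| ≤ t := by
  set κ := ⌈2*M/t⌉₊ with hκ
  set K := ⌈2*T/t⌉₊ with hK
  have hκ1 : 1 ≤ κ := by
    rw [hκ]
    apply Nat.one_le_ceil_iff.2
    positivity
  have hMtκ : 2*M/t ≤ (κ : ℝ) := Nat.le_ceil _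
  -- the rounded start value
  set n0 : ℤ := ⌊s 0 / t + 1/2⌋ with hn0
  have hn0le : (n0 : ℝ) ≤ s 0 / t + 1/2 := Int.floor_le _
  have hn0gt : s 0 / t + 1/2 < (n0 : ℝ) + 1 := Int.lt_floor_add_one _
  have hst : |s 0 / t| ≤ M / t := by
    rw [abs_div, abs_of_pos ht]
    gcongr
  have hq : s 0 = t * (s 0 / t) := by field_simp
  have habs : |s 0 - t * n0| ≤ t / 2 := by
    rw [abs_le]
    have h1 := mul_le_mul_of_nonneg_left hn0le ht.le
    have h2 := mul_le_mul_of_nonneg_left hn0gt.le ht.le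
    constructor <;> nlinarith [h1, h2]
  have hn0bd : -(κ:ℤ) ≤ n0 ∧ n0 ≤ κ := by
    have h1 : (n0:ℝ) ≤ κ := by
      have : M / t ≤ (κ:ℝ)/2 := by linarith [hMtκ, (by ring_nf : 2*M/t = 2*(M/t))]
      have h2 := abs_le.1 hst
      have : (n0:ℝ) ≤ (κ:ℝ)/2 + 1/2 := by linarith
      have : ((κ:ℝ)/2 + 1/2) ≤ κ := by
        have : (1:ℝ) ≤ κ := by exact_mod_cast hκ1
        linarith
      linarith
    have h2 : -(κ:ℝ) ≤ n0 := by
      have : M / t ≤ (κ:ℝ)/2 := by linarith [hMtκ, (by ring_nf : 2*M/t = 2*(M/t))]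
      have h2 := abs_le.1 hst
      have : -(κ:ℝ)/2 - 1/2 ≤ (n0:ℝ) := by linarith
      have : (1:ℝ) ≤ κ := by exact_mod_cast hκ1
      linarith
    exact ⟨by exact_mod_cast h2, by exact_mod_cast h1⟩
  set n : Fin (4*κ+2) := ⟨(n0 + 2*κ).toNat, by omega⟩ with hn
  have hnval : ((n : ℕ) : ℝ) - 2*(κ:ℝ) = (n0 : ℝ) := by
    have h1 : ((n:ℕ) : ℤ) = n0 + 2*κ := by
      rw [hn]
      simp only
      exact Int.toNat_of_nonneg (by omega)
    have := congrArg (fun z : ℤ => (z : ℝ)) h1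
    push_cast at this
    linarith
  -- positive/negative variations
  set A : ℕ → ℝ := fun m => ∑ i ∈ Finset.range m, max (s (i+1) - s i) 0 with hA
  set B : ℕ → ℝ := fun m => ∑ i ∈ Finset.range m, max (s i - s (i+1)) 0 with hB
  have hAnn : ∀ m, 0 ≤ A m := fun m => Finset.sum_nonneg fun i _ => le_max_right _ _
  have hBnn : ∀ m, 0 ≤ B m := fun m => Finset.sum_nonneg fun i _ => le_max_right _ _
  have hAmono : Monotone A := by
    intro a b hab
    exact Finset.sum_le_sum_of_subset_of_nonneg (Finset.range_subset_range.2 hab)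
      (fun i _ _ => le_max_right _ _)
  have hBmono : Monotone B := by
    intro a b hab
    exact Finset.sum_le_sum_of_subset_of_nonneg (Finset.range_subset_range.2 hab)
      (fun i _ _ => le_max_right _ _)
  have hABdiff : ∀ m, A m - B m = s m - s 0 := by
    intro m
    rw [hA, hB]
    simp only
    rw [← Finset.sum_sub_distrib]
    rw [show (∑ i ∈ Finset.range m, (max (s (i+1) - s i) 0 - max (s i - s (i+1)) 0))
        = ∑ i ∈ Finset.range m, (s (i+1) - s i) from
      Finset.sum_congr rfl fun i _ => by
        rcases le_total (s (i+1) - s i) 0 with h | h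
        · rw [max_eq_right h, max_eq_left (by linarith)]; ring
        · rw [max_eq_left h, max_eq_right (by linarith)]; ring]
    exact Finset.sum_range_sub s m
  have hABsum : A R' + B R' ≤ T := by
    rw [hA, hB]
    simp only
    rw [← Finset.sum_add_distrib]
    refine le_trans (le_of_eq (Finset.sum_congr rfl fun i _ => ?_)) hTV
    rcases le_total (s (i+1) - s i) 0 with h | h
    · rw [max_eq_right h, max_eq_left (by linarith), abs_of_nonpos h]; ring
    · rw [max_eq_left h, max_eq_right (by linarith), abs_of_nonneg h]; ring
  -- quantized variations
  set α : ℕ → ℕ := fun m => ⌊2 * A m / t⌋₊ with hα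
  set β : ℕ → ℕ := fun m => ⌊2 * B m / t⌋₊ with hβ
  have hαmono : Monotone α := fun a b hab =>
    Nat.floor_mono (by
      gcongr
      linarith [hAmono hab])
  have hβmono : Monotone β := fun a b hab =>
    Nat.floor_mono (by
      gcongr
      linarith [hBmono hab])
  have hα0 : α 0 = 0 := by simp [hα, hA]
  have hβ0 : β 0 = 0 := by simp [hβ, hB]
  refine ⟨n, fun i => α (i+1) - α i, fun i => β (i+1) - β i, ?_, ?_⟩
  · have h1 : ∑ i ∈ Finset.range R', (α (i+1) - α i + (β (i+1) - β i))
        = (α R' - α 0) + (β R' - β 0) := by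
      rw [Finset.sum_add_distrib, Finset.sum_range_tsub hαmono, Finset.sum_range_tsub hβmono]
    rw [h1, hα0, hβ0, Nat.sub_zero, Nat.sub_zero]
    have h2 : ((α R' + β R' : ℕ) : ℝ) ≤ (K : ℝ) := by
      push_cast
      have ha : (α R' : ℝ) ≤ 2 * A R' / t := Nat.floor_le (by positivity)
      have hb : (β R' : ℝ) ≤ 2 * B R' / t := Nat.floor_le (by positivity)
      have : 2 * A R' / t + 2 * B R' / t ≤ 2 * T / t := by
        rw [← add_div]
        gcongr
        linarith [hABsum]
      have hceil : 2*T/t ≤ (K:ℝ) := Nat.le_ceil _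
      linarith
    exact_mod_cast h2
  · intro m hm
    have hsumc : (∑ i ∈ Finset.range m, ((α (i+1) - α i : ℕ) : ℝ)) = (α m : ℝ) := by
      rw [← Nat.cast_sum, Finset.sum_range_tsub hαmono, hα0, Nat.sub_zero]
    have hsumd : (∑ i ∈ Finset.range m, ((β (i+1) - β i : ℕ) : ℝ)) = (β m : ℝ) := by
      rw [← Nat.cast_sum, Finset.sum_range_tsub hβmono, hβ0, Nat.sub_zero]
    rw [hsumc, hsumd, hnval]
    have hsm : s m = s 0 + A m - B m := by have := hABdiff m; linarith
    have ht2 : (0:ℝ) < t/2 := by linarith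
    have hAid : (t/2) * (2 * A m / t) = A m := by field_simp
    have hBid : (t/2) * (2 * B m / t) = B m := by field_simp
    have hαlo : (t/2) * (α m : ℝ) ≤ A m := by
      have h1 : (α m : ℝ) ≤ 2 * A m / t := Nat.floor_le (by positivity)
      have := mul_le_mul_of_nonneg_left h1 ht2.le
      linarith [hAid]
    have hαhi : A m < (t/2) * ((α m : ℝ) + 1) := by
      have h2 : 2 * A m / t < (α m : ℝ) + 1 := by
        exact_mod_cast Nat.lt_floor_add_one (2 * A m / t)
      have := mul_lt_mul_of_pos_left h2 ht2
      linarith [hAid]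
    have hβlo : (t/2) * (β m : ℝ) ≤ B m := by
      have h1 : (β m : ℝ) ≤ 2 * B m / t := Nat.floor_le (by positivity)
      have := mul_le_mul_of_nonneg_left h1 ht2.le
      linarith [hBid]
    have hβhi : B m < (t/2) * ((β m : ℝ) + 1) := by
      have h2 : 2 * B m / t < (β m : ℝ) + 1 := by
        exact_mod_cast Nat.lt_floor_add_one (2 * B m / t)
      have := mul_lt_mul_of_pos_left h2 ht2
      linarith [hBid]
    have habs2 := abs_le.1 habs
    have key : s m - (t * (n0:ℝ) + (t/2) * ((α m:ℝ) - (β m:ℝ)))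
        = (s 0 - t*(n0:ℝ)) + (A m - (t/2)*(α m:ℝ)) - (B m - (t/2)*(β m:ℝ)) := by
      rw [hsm]; ring
    have e1 : (t/2:ℝ)*((α m:ℝ)+1) = (t/2)*(α m:ℝ) + t/2 := by ring
    have e2 : (t/2:ℝ)*((β m:ℝ)+1) = (t/2)*(β m:ℝ) + t/2 := by ring
    rw [key, abs_le]
    constructor <;> linarith

def pcol (N m : ℕ) : ℕ := if (m / N) % 2 = 0 then m % N else N - 1 - m % N

def pathPt (N m : ℕ) : ZMod N × ZMod N := (((m / N : ℕ) : ZMod N), ((pcol N m : ℕ) : ZMod N))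

def gidx (N : ℕ) [NeZero N] (k : ZMod N × ZMod N) : ℕ :=
  N * k.1.val + (if k.1.val % 2 = 0 then k.2.val else N - 1 - k.2.val)

lemma pathPt_row (N i j : ℕ) (hN : 0 < N) (hj : j < N) :
    pathPt N (N*i + j)
      = (((i:ℕ) : ZMod N), (((if i % 2 = 0 then j else N - 1 - j : ℕ)) : ZMod N)) := by
  have hdiv : (N*i + j) / N = i := by
    rw [Nat.mul_add_div hN, Nat.div_eq_of_lt hj, add_zero]
  have hmod : (N*i + j) % N = j := by
    rw [Nat.mul_add_mod, Nat.mod_eq_of_lt hj]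
  simp [pathPt, pcol, hdiv, hmod]

lemma pathPt_gidx (N : ℕ) [NeZero N] (k : ZMod N × ZMod N) :
    pathPt N (gidx N k) = k := by
  have hN : 0 < N := Nat.pos_of_ne_zero (NeZero.ne N)
  have h1 : k.1.val < N := ZMod.val_lt k.1
  have h2 : k.2.val < N := ZMod.val_lt k.2
  have hq : (if k.1.val % 2 = 0 then k.2.val else N - 1 - k.2.val) < N := by
    split <;> omega
  rw [gidx, pathPt_row N _ _ hN hq]
  have : (if k.1.val % 2 = 0 then
      (if k.1.val % 2 = 0 then k.2.val else N - 1 - k.2.val)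
      else N - 1 - (if k.1.val % 2 = 0 then k.2.val else N - 1 - k.2.val)) = k.2.val := by
    split <;> simp_all <;> omega
  rw [this]
  have e1 : ((k.1.val : ℕ) : ZMod N) = k.1 := ZMod.natCast_rightInverse k.1
  have e2 : ((k.2.val : ℕ) : ZMod N) = k.2 := ZMod.natCast_rightInverse k.2
  rw [e1, e2]

lemma gidx_le (N : ℕ) [NeZero N] (k : ZMod N × ZMod N) : gidx N k ≤ N*N - 1 := by
  have h1 : k.1.val < N := ZMod.val_lt k.1
  have h2 : k.2.val < N := ZMod.val_lt k.2
  have hq : (if k.1.val % 2 = 0 then k.2.val else N - 1 - k.2.val) < N := by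
    split <;> omega
  have : gidx N k < N * N := by
    calc gidx N k < N * k.1.val + N := by rw [gidx]; omega
      _ = N * (k.1.val + 1) := by ring
      _ ≤ N * N := Nat.mul_le_mul_left N h1
  omega

lemma sum_range_mul' (f : ℕ → ℝ) (a b : ℕ) :
    ∑ m ∈ Finset.range (a*b), f m
      = ∑ i ∈ Finset.range a, ∑ j ∈ Finset.range b, f (b*i + j) := by
  induction a with
  | zero => simp
  | succ a ih =>
      rw [Finset.sum_range_succ, ← ih, Nat.succ_mul, Finset.sum_range_add]
      congr 1
      apply Finset.sum_congr rfl
      intro j hj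
      congr 1
      ring

lemma path_tv (N : ℕ) (hN : 2 ≤ N) [NeZero N] (u : ZMod N × ZMod N → ℝ) :
    ∑ m ∈ Finset.range (N*N - 1), |u (pathPt N (m+1)) - u (pathPt N m)| ≤ tv N u := by
  have hN0 : 0 < N := by omega
  have hNN : 4 ≤ N*N := Nat.mul_le_mul hN hN
  set f' : ℕ → ℝ := fun m =>
    if m + 1 < N*N then |u (pathPt N (m+1)) - u (pathPt N m)| else 0 with hf'
  have step1 : ∑ m ∈ Finset.range (N*N - 1), |u (pathPt N (m+1)) - u (pathPt N m)|
      = ∑ m ∈ Finset.range (N*N), f' m := by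
    have h0 := Finset.sum_range_succ f' (N*N-1)
    rw [show N*N-1+1 = N*N by omega] at h0
    have hlast : f' (N*N-1) = 0 := by
      simp only [hf']
      rw [if_neg]
      omega
    rw [h0, hlast, add_zero]
    apply Finset.sum_congr rfl
    intro m hm
    rw [Finset.mem_range] at hm
    simp only [hf']
    rw [if_pos (by omega)]
  rw [step1, sum_range_mul' f' N N]
  have hrow : ∀ i ∈ Finset.range N, ∑ j ∈ Finset.range N, f' (N*i + j)
      = (∑ j ∈ Finset.range (N-1),
          |u ((i : ZMod N), (j : ZMod N) + 1) - u ((i : ZMod N), (j : ZMod N))|)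
        + (if i < N - 1 then
            |u (((i+1 : ℕ) : ZMod N), (((if i % 2 = 0 then N-1 else 0) : ℕ) : ZMod N))
              - u (((i : ℕ) : ZMod N), (((if i % 2 = 0 then N-1 else 0) : ℕ) : ZMod N))|
          else 0) := by
    intro i hi
    rw [Finset.mem_range] at hi
    have hsplit := Finset.sum_range_succ (fun j => f' (N*i + j)) (N-1)
    rw [show N-1+1 = N by omega] at hsplit
    rw [hsplit]
    congr 1
    · -- horizontal part
      have hterm : ∀ j ∈ Finset.range (N-1), f' (N*i + j)
          = |u (((i:ℕ) : ZMod N), (((if i % 2 = 0 then j+1 else N-1-(j+1)) : ℕ) : ZMod N))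
              - u (((i:ℕ) : ZMod N), (((if i % 2 = 0 then j else N-1-j) : ℕ) : ZMod N))| := by
        intro j hj
        rw [Finset.mem_range] at hj
        have hcond : N*i + j + 1 < N*N := by
          calc N*i + j + 1 < N*i + N := by omega
            _ = N*(i+1) := by ring
            _ ≤ N*N := Nat.mul_le_mul (Nat.le_refl N) (by omega)
        simp only [hf']
        rw [if_pos hcond, show N*i + j + 1 = N*i + (j+1) by ring,
          pathPt_row N i (j+1) hN0 (by omega), pathPt_row N i j hN0 (by omega)]
      rw [Finset.sum_congr rfl hterm]
      rcases Nat.mod_two_eq_zero_or_one i with hpar | hpar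
      · apply Finset.sum_congr rfl
        intro j hj
        rw [if_pos hpar, if_pos hpar]
        push_cast
        ring_nf
      · -- odd row: reflect
        rw [← Finset.sum_range_reflect
          (fun j => |u ((i : ZMod N), (j : ZMod N) + 1) - u ((i : ZMod N), (j : ZMod N))|)
          (N-1)]
        apply Finset.sum_congr rfl
        intro j hj
        rw [Finset.mem_range] at hj
        rw [if_neg (by omega), if_neg (by omega)]
        have e1 : N - 1 - (j+1) = N - 1 - 1 - j := by omega
        have e2 : N - 1 - j = (N - 1 - 1 - j) + 1 := by omega
        rw [e1, e2, abs_sub_comm]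
        push_cast
        ring_nf
    · -- vertical part
      have hmulsucc : N*(i+1) = N*i + N := Nat.mul_succ N i
      rcases Nat.lt_or_ge i (N-1) with hi' | hi'
      · rw [if_pos hi']
        have hcond : N*i + (N-1) + 1 < N*N := by
          have h5 : N*(i+1) ≤ N*(N-1) := Nat.mul_le_mul (Nat.le_refl N) (by omega)
          have h6 : N*(N-1) < N*N := (Nat.mul_lt_mul_left hN0).2 (by omega)
          omega
        simp only [hf']
        rw [if_pos hcond,
          show N*i + (N-1) + 1 = N*(i+1) + 0 by omega,
          pathPt_row N (i+1) 0 hN0 hN0,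
          pathPt_row N i (N-1) hN0 (by omega)]
        have hz1 : (if (i+1) % 2 = 0 then 0 else N-1-0) = (if i % 2 = 0 then N-1 else 0) := by
          rcases Nat.mod_two_eq_zero_or_one i with h | h
          · rw [if_neg (by omega), if_pos h]
            omega
          · rw [if_pos (by omega), if_neg (by omega)]
        have hz2 : (if i % 2 = 0 then N-1 else N-1-(N-1)) = (if i % 2 = 0 then N-1 else 0) := by
          split <;> omega
        rw [hz1, hz2]
      · rw [if_neg (by omega)]
        have hi2 : i = N - 1 := by omega
        subst hi2
        have hmm : N*(N-1) + (N-1) + 1 = N * N := by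
          have h4 : N * (N - 1 + 1) = N * (N-1) + N := Nat.mul_succ N (N-1)
          rw [show N-1+1 = N by omega] at h4
          omega
        simp only [hf']
        rw [if_neg (by omega)]
  rw [Finset.sum_congr rfl hrow, Finset.sum_add_distrib]
  have hvert : ∑ i ∈ Finset.range N,
      (if i < N - 1 then
        |u (((i+1 : ℕ) : ZMod N), (((if i % 2 = 0 then N-1 else 0) : ℕ) : ZMod N))
          - u (((i : ℕ) : ZMod N), (((if i % 2 = 0 then N-1 else 0) : ℕ) : ZMod N))|
      else 0)
      ≤ ∑ i ∈ Finset.range (N - 1), ∑ j ∈ Finset.range N,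
          |u ((i : ZMod N) + 1, (j : ZMod N)) - u ((i : ZMod N), (j : ZMod N))| := by
    have hsplit := Finset.sum_range_succ (fun i => if i < N - 1 then
        |u (((i+1 : ℕ) : ZMod N), (((if i % 2 = 0 then N-1 else 0) : ℕ) : ZMod N))
          - u (((i : ℕ) : ZMod N), (((if i % 2 = 0 then N-1 else 0) : ℕ) : ZMod N))|
      else 0) (N-1)
    rw [show N-1+1 = N by omega] at hsplit
    rw [hsplit, if_neg (show ¬(N-1 < N-1) by omega), add_zero]
    apply Finset.sum_le_sum
    intro i hi
    rw [Finset.mem_range] at hi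
    rw [if_pos hi]
    have hzN : (if i % 2 = 0 then N-1 else 0) < N := by split <;> omega
    have hsingle := Finset.single_le_sum (s := Finset.range N)
      (f := fun j : ℕ => |u ((i : ZMod N) + 1, (j : ZMod N)) - u ((i : ZMod N), (j : ZMod N))|)
      (fun j _ => abs_nonneg _) (Finset.mem_range.2 hzN)
    refine le_trans (le_of_eq ?_) hsingle
    push_cast
    ring_nf
  have htv2 : ∑ i ∈ Finset.range N, ∑ j ∈ Finset.range (N-1),
      |u ((i : ZMod N), (j : ZMod N) + 1) - u ((i : ZMod N), (j : ZMod N))|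
      + ∑ i ∈ Finset.range N,
      (if i < N - 1 then
        |u (((i+1 : ℕ) : ZMod N), (((if i % 2 = 0 then N-1 else 0) : ℕ) : ZMod N))
          - u (((i : ℕ) : ZMod N), (((if i % 2 = 0 then N-1 else 0) : ℕ) : ZMod N))|
      else 0) ≤ tv N u := by
    rw [tv]
    linarith [hvert]
  exact htv2

set_option maxHeartbeats 1000000 in
/-- covering of the ℓ∞-bounded BV ball
M̃ = {u : ‖u‖∞ ≤ M, ‖∇u‖₁ ≤ T} by at most (4κ+2)·(2(R+K−1))^K closed ℓ∞-balls of
radius t, where R = 2N(N−1), K = ⌈2T/t⌉, κ = ⌈2M/t⌉. -/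
theorem stmt10 (N : ℕ) (hN : 2 ≤ N) [NeZero N]
    (M T t : ℝ) (hM : 0 < M) (hT : 0 ≤ T) (ht : 0 < t) :
    ∃ (P : ℕ) (v : Fin P → ZMod N × ZMod N → ℝ),
      P ≤ (4 * ⌈2 * M / t⌉₊ + 2) *
          (2 * (2 * N * (N - 1) + ⌈2 * T / t⌉₊ - 1)) ^ ⌈2 * T / t⌉₊ ∧
      ∀ u : ZMod N × ZMod N → ℝ, (∀ k, |u k| ≤ M) → tv N u ≤ T →
        ∃ j : Fin P, ∀ k, |u k - v j k| ≤ t := by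
  have hMT : (2:ℝ)*M/t = 2*(M/t) := by ring
  set κ := ⌈2 * M / t⌉₊ with hκ
  set K := ⌈2 * T / t⌉₊ with hK
  set R' := N*N - 1 with hR'
  set L := 2*R' with hL
  set P := (4*κ+2) * (L+1)^K with hP
  have hcardI : Fintype.card (Fin (4*κ+2) × (Fin K → Fin (L+1))) = P := by
    simp [Fintype.card_fun, hP]
  set eqv := Fintype.equivFinOfCardEq hcardI with heqv
  set V : Fin (4*κ+2) × (Fin K → Fin (L+1)) → (ZMod N × ZMod N) → ℝ := fun ng k =>
    t * (((ng.1 : ℕ) : ℝ) - 2 * (κ : ℝ)) +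
      (t/2) * ((∑ i ∈ Finset.range (gidx N k),
          (((Finset.univ.filter (fun j => (ng.2 j : ℕ) = i)).card : ℕ) : ℝ)) -
        ∑ i ∈ Finset.range (gidx N k),
          (((Finset.univ.filter (fun j => (ng.2 j : ℕ) = R' + i)).card : ℕ) : ℝ)) with hV
  refine ⟨P, fun j => V (eqv.symm j), ?_, ?_⟩
  · -- cardinality bound
    rw [hP]
    rcases Nat.eq_zero_or_pos K with hK0 | hK1
    · rw [hK0]
      simp
    · have hbase : L + 1 ≤ 2 * (2*N*(N-1) + K - 1) := by
        have hN' : N ≤ N*(N-1) := by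
          have h5 := Nat.mul_le_mul (Nat.le_refl N) (show 1 ≤ N-1 by omega)
          simpa using h5
        have hb : N*N = N*(N-1) + N := by
          have h4 : N * (N - 1 + 1) = N * (N-1) + N := Nat.mul_succ N (N-1)
          rw [show N-1+1 = N by omega] at h4
          omega
        have h2 : 2*N*(N-1) = 2*(N*(N-1)) := by ring
        rw [hL, hR']
        omega
      exact Nat.mul_le_mul (Nat.le_refl _) (Nat.pow_le_pow_left hbase K)
  · -- covering
    intro u hu htv
    set s : ℕ → ℝ := fun m => u (pathPt N m) with hs
    have hs0 : |s 0| ≤ M := hu _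
    have hTV : ∑ i ∈ Finset.range R', |s (i+1) - s i| ≤ T :=
      le_trans (path_tv N hN u) htv
    obtain ⟨n, c, d, hcd, herr⟩ := quant1D t M T ht hM hT R' s hs0 hTV
    set e : ℕ → ℕ := fun j => if j < R' then c j else d (j - R') with he
    have hesum : ∑ j ∈ Finset.range L, e j ≤ K := by
      have hsplit : ∑ j ∈ Finset.range (R' + R'), e j
          = (∑ j ∈ Finset.range R', e j) + ∑ j ∈ Finset.range R', e (R' + j) :=
        Finset.sum_range_add e R' R'
      have h1 : ∑ j ∈ Finset.range R', e j = ∑ j ∈ Finset.range R', c j :=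
        Finset.sum_congr rfl fun j hj => by
          rw [Finset.mem_range] at hj
          rw [he]; simp only; rw [if_pos hj]
      have h2 : ∑ j ∈ Finset.range R', e (R' + j) = ∑ j ∈ Finset.range R', d j :=
        Finset.sum_congr rfl fun j hj => by
          rw [Finset.mem_range] at hj
          rw [he]; simp only; rw [if_neg (by omega), Nat.add_sub_cancel_left]
      rw [hL, two_mul, hsplit, h1, h2, ← Finset.sum_add_distrib]
      exact hcd
    obtain ⟨g, hg⟩ := exists_g L K e hesum
    refine ⟨eqv (n, g), ?_⟩
    intro k
    have hmle : gidx N k ≤ R' := gidx_le N k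
    have hRL : R' ≤ L := by omega
    have hc1 : ∑ i ∈ Finset.range (gidx N k),
        (((Finset.univ.filter (fun j => (g j : ℕ) = i)).card : ℕ) : ℝ)
        = ∑ i ∈ Finset.range (gidx N k), (c i : ℝ) := by
      apply Finset.sum_congr rfl
      intro i hi
      rw [Finset.mem_range] at hi
      have hiR : i < R' := lt_of_lt_of_le hi hmle
      rw [hg i (by omega)]
      rw [he]; simp only; rw [if_pos hiR]
    have hc2 : ∑ i ∈ Finset.range (gidx N k),
        (((Finset.univ.filter (fun j => (g j : ℕ) = R' + i)).card : ℕ) : ℝ)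
        = ∑ i ∈ Finset.range (gidx N k), (d i : ℝ) := by
      apply Finset.sum_congr rfl
      intro i hi
      rw [Finset.mem_range] at hi
      have hiR : i < R' := lt_of_lt_of_le hi hmle
      rw [hg (R' + i) (by omega)]
      rw [he]; simp only; rw [if_neg (by omega), Nat.add_sub_cancel_left]
    have hk : u k = s (gidx N k) := by rw [hs]; simp only; rw [pathPt_gidx N k]
    have hfin := herr (gidx N k) hmle
    rw [← hc1, ← hc2, ← hk] at hfin
    show |u k - V (eqv.symm (eqv (n, g))) k| ≤ t
    rw [Equiv.symm_apply_apply]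
    exact hfin
end
end

section
/- Let σ > 0. For every ω = (ω₁,ω₂) with −π ≤ ω₁ ≤ π and −π ≤ ω₂ ≤ π, (1/(2πσ²)) · Σ_{k∈ℤ²} exp(−‖k‖²/(2σ²))·cos(⟨ω,k⟩) ≥ exp(−σ²π²), where ‖·‖ is the Euclidean norm on ℝ² and ⟨·,·⟩ the Euclidean inner product. (The left-hand side equals the Fourier series Σ_k a[k]e^{−i⟨ω,k⟩} of the normalized Gaussian filter a[k] = (1/(2πσ²))exp(−‖k‖²/(2σ²)), which is real-valued by symmetry.) -/
open scoped Real
open Complex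

-- summability of shifted Gaussians over ℤ
lemma sumA {b c0 : ℝ} (hb : 0 < b) :
    Summable (fun n : ℤ ↦ Real.exp (-b * ((n : ℝ) - c0) ^ 2)) := by
  have h := summable_pow_mul_jacobiTheta₂_term_bound (b * |c0| / π) (T := b / π)
    (div_pos hb Real.pi_pos) 0
  simp only [pow_zero, one_mul] at h
  refine h.of_nonneg_of_le (fun n ↦ (Real.exp_pos _).le) (fun n ↦ ?_)
  rw [Real.exp_le_exp]
  have hπ : (π : ℝ) ≠ 0 := Real.pi_ne_zero
  have h1 : c0 * (n : ℝ) ≤ |c0| * |(n : ℝ)| := by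
    calc c0 * (n : ℝ) ≤ |c0 * (n : ℝ)| := le_abs_self _
    _ = |c0| * |(n : ℝ)| := abs_mul _ _
  have h2 : -π * (b / π * ((n:ℤ):ℝ) ^ 2 - 2 * (b * |c0| / π) * |((n:ℤ):ℝ)|)
      = -b * ((n:ℝ)) ^ 2 + 2 * b * (|c0| * |(n : ℝ)|) := by
    field_simp
    ring
  push_cast at h2 ⊢
  rw [h2]
  nlinarith [sq_nonneg c0, hb.le]


noncomputable def gfun (σ ω : ℝ) (k : ℤ) : ℂ :=
  Complex.exp (((-((k:ℝ)^2) / (2*σ^2) : ℝ) : ℂ) + ((ω * (k:ℝ) : ℝ) : ℂ) * Complex.I)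

lemma norm_gfun (σ ω : ℝ) (k : ℤ) : ‖gfun σ ω k‖ = Real.exp (-((k:ℝ)^2) / (2*σ^2)) := by
  rw [gfun, Complex.norm_exp, Complex.add_re, Complex.mul_I_re]
  norm_cast
  simp

lemma oneD {σ : ℝ} (hσ : 0 < σ) (ω : ℝ) :
    ∑' k : ℤ, gfun σ ω k =
      ((σ * Real.sqrt (2*π) *
        ∑' n : ℤ, Real.exp (-(2*π^2*σ^2) * ((n:ℝ) - ω/(2*π))^2) : ℝ) : ℂ) := by
  have hπ := Real.pi_pos
  have hσ2 : σ^2 ≠ 0 := by positivity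
  set a : ℂ := ((1/(2*π*σ^2) : ℝ) : ℂ) with ha_def
  have ha : 0 < a.re := by
    rw [ha_def, Complex.ofReal_re]; positivity
  have key := Complex.tsum_exp_neg_quadratic ha (Complex.I * ω / (2*π))
  have e1 : ∀ k : ℤ, (-(π:ℂ) * a * (k:ℂ)^2 + 2*π*(Complex.I * ω / (2*π))*(k:ℂ))
      = ((-((k:ℝ)^2) / (2*σ^2) : ℝ) : ℂ) + ((ω * (k:ℝ) : ℝ) : ℂ) * Complex.I := by
    intro k
    rw [ha_def]
    push_cast
    have hπ' : (π:ℂ) ≠ 0 := by exact_mod_cast Real.pi_ne_zero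
    have hσ' : (σ:ℂ)^2 ≠ 0 := by exact_mod_cast hσ2
    field_simp
  have e2 : ∀ n : ℤ, Complex.exp (-(π:ℂ)/a * ((n:ℂ) + Complex.I * (Complex.I * ω / (2*π)))^2)
      = ((Real.exp (-(2*π^2*σ^2) * ((n:ℝ) - ω/(2*π))^2) : ℝ) : ℂ) := by
    intro n
    rw [Complex.ofReal_exp]
    congr 1
    rw [ha_def]
    have hπ' : (π:ℂ) ≠ 0 := by exact_mod_cast Real.pi_ne_zero
    have hσ' : (σ:ℂ)^2 ≠ 0 := by exact_mod_cast hσ2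
    have hI : Complex.I * (Complex.I * (ω:ℂ) / (2*π)) = -((ω:ℂ)/(2*π)) := by
      rw [mul_div_assoc', ← mul_assoc, Complex.I_mul_I]
      ring
    rw [hI]
    push_cast
    field_simp
    ring
  have e3 : (1:ℂ) / a ^ (1/2 : ℂ) = ((σ * Real.sqrt (2*π) : ℝ) : ℂ) := by
    have hpos : (0:ℝ) < 1/(2*π*σ^2) := by positivity
    have : a ^ (1/2 : ℂ) = (((1/(2*π*σ^2)) ^ ((1:ℝ)/2) : ℝ) : ℂ) := by
      rw [ha_def, show (1/2:ℂ) = (((1:ℝ)/2 : ℝ):ℂ) by norm_num, ← Complex.ofReal_cpow hpos.le]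
    rw [this]
    have h4 : ((1/(2*π*σ^2)) ^ ((1:ℝ)/2) : ℝ) = 1 / (σ * Real.sqrt (2*π)) := by
      rw [← Real.sqrt_eq_rpow, one_div, Real.sqrt_inv, Real.sqrt_mul (by positivity : (0:ℝ) ≤ 2*π)]
      rw [Real.sqrt_sq hσ.le, one_div, mul_comm]
    rw [h4]
    have hne : (σ * Real.sqrt (2*π)) ≠ 0 := by positivity
    push_cast
    rw [one_div, one_div, inv_inv]
  calc ∑' k : ℤ, gfun σ ω k
      = ∑' k : ℤ, Complex.exp (-(π:ℂ) * a * (k:ℂ)^2 + 2*π*(Complex.I * ω / (2*π))*(k:ℂ)) := by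
        refine tsum_congr fun k ↦ ?_
        rw [gfun, e1 k]
    _ = 1 / a ^ (1/2 : ℂ) *
        ∑' n : ℤ, Complex.exp (-(π:ℂ)/a * ((n:ℂ) + Complex.I * (Complex.I * ω / (2*π)))^2) := key
    _ = ((σ * Real.sqrt (2*π) : ℝ) : ℂ) *
        ∑' n : ℤ, ((Real.exp (-(2*π^2*σ^2) * ((n:ℝ) - ω/(2*π))^2) : ℝ) : ℂ) := by
        rw [e3]; exact congrArg _ (tsum_congr e2)
    _ = _ := by
        rw [← Complex.ofReal_tsum, ← Complex.ofReal_mul, mul_assoc]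

/-- uniform lower bound on the Fourier symbol of the normalized
two-dimensional discrete Gaussian filter: for ω ∈ [−π,π]²,
(1/(2πσ²))·Σ_{k∈ℤ²} e^{−‖k‖²/(2σ²)}cos⟨ω,k⟩ ≥ e^{−σ²π²}. -/
theorem stmt14 (σ : ℝ) (hσ : 0 < σ) (ω : ℝ × ℝ)
    (hω1 : ω.1 ∈ Set.Icc (-π) π) (hω2 : ω.2 ∈ Set.Icc (-π) π) :
    Real.exp (-(σ ^ 2 * π ^ 2)) ≤
      (1 / (2 * π * σ ^ 2)) *
        ∑' k : ℤ × ℤ,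
          Real.exp (-(((k.1 : ℝ) ^ 2 + (k.2 : ℝ) ^ 2)) / (2 * σ ^ 2)) *
            Real.cos (ω.1 * (k.1 : ℝ) + ω.2 * (k.2 : ℝ)) := by
  have hπ := Real.pi_pos
  have hb : (0:ℝ) < 1/(2*σ^2) := by positivity
  have hb2 : (0:ℝ) < 2*π^2*σ^2 := by positivity
  have hnorm : ∀ ω0:ℝ, Summable fun k:ℤ ↦ ‖gfun σ ω0 k‖ := by
    intro ω0
    refine (sumA (b := 1/(2*σ^2)) (c0 := 0) hb).congr fun n ↦ ?_
    rw [norm_gfun]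
    congr 1
    field_simp
    ring
  set G : ℝ → ℝ := fun ω0 ↦ ∑' n : ℤ, Real.exp (-(2*π^2*σ^2) * ((n:ℝ) - ω0/(2*π))^2) with hG_def
  -- the 2D sum equals the product of the two 1D Poisson sums
  have hterm : ∀ k : ℤ×ℤ, (gfun σ ω.1 k.1 * gfun σ ω.2 k.2).re
      = Real.exp (-(((k.1:ℝ)^2 + (k.2:ℝ)^2)) / (2*σ^2)) *
          Real.cos (ω.1*(k.1:ℝ) + ω.2*(k.2:ℝ)) := by
    intro k
    rw [gfun, gfun, ← Complex.exp_add, Complex.exp_re]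
    simp only [Complex.add_re, Complex.add_im, Complex.ofReal_re, Complex.ofReal_im,
      Complex.mul_I_re, Complex.mul_I_im, neg_zero, add_zero, zero_add]
    congr 1
    congr 1
    ring
  have hsum : (∑' k : ℤ × ℤ,
        Real.exp (-(((k.1 : ℝ) ^ 2 + (k.2 : ℝ) ^ 2)) / (2 * σ ^ 2)) *
          Real.cos (ω.1 * (k.1 : ℝ) + ω.2 * (k.2 : ℝ)))
      = (σ * Real.sqrt (2*π) * G ω.1) * (σ * Real.sqrt (2*π) * G ω.2) := by
    have hsummable := summable_mul_of_summable_norm (hnorm ω.1) (hnorm ω.2)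
    have h1 : (∑' k : ℤ×ℤ, gfun σ ω.1 k.1 * gfun σ ω.2 k.2)
        = (((σ * Real.sqrt (2*π) * G ω.1) * (σ * Real.sqrt (2*π) * G ω.2) : ℝ) : ℂ) := by
      rw [← tsum_mul_tsum_of_summable_norm (hnorm ω.1) (hnorm ω.2),
        oneD hσ ω.1, oneD hσ ω.2, ← Complex.ofReal_mul]
    calc (∑' k : ℤ × ℤ,
          Real.exp (-(((k.1 : ℝ) ^ 2 + (k.2 : ℝ) ^ 2)) / (2 * σ ^ 2)) *
            Real.cos (ω.1 * (k.1 : ℝ) + ω.2 * (k.2 : ℝ)))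
        = ∑' k : ℤ×ℤ, (gfun σ ω.1 k.1 * gfun σ ω.2 k.2).re := by
          exact tsum_congr fun k ↦ (hterm k).symm
      _ = (∑' k : ℤ×ℤ, gfun σ ω.1 k.1 * gfun σ ω.2 k.2).re := (Complex.re_tsum hsummable).symm
      _ = _ := by rw [h1, Complex.ofReal_re]
  -- lower bound each 1D Poisson sum by its 0-th term
  have hGlb : ∀ ω0 : ℝ, Real.exp (-(σ^2*ω0^2/2)) ≤ G ω0 := by
    intro ω0
    have hsummG : Summable fun n:ℤ ↦ Real.exp (-(2*π^2*σ^2) * ((n:ℝ) - ω0/(2*π))^2) :=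
      sumA hb2
    have h0 := Summable.le_tsum hsummG 0 (fun n _ ↦ (Real.exp_pos _).le)
    refine le_trans (le_of_eq ?_) h0
    congr 1
    push_cast
    field_simp
    ring
  have hGpos : ∀ ω0 : ℝ, 0 < G ω0 := fun ω0 ↦ lt_of_lt_of_le (Real.exp_pos _) (hGlb ω0)
  rw [hsum]
  have hωsq1 : ω.1^2 ≤ π^2 := sq_le_sq' (by linarith [hω1.1]) hω1.2
  have hωsq2 : ω.2^2 ≤ π^2 := sq_le_sq' (by linarith [hω2.1]) hω2.2
  have hrw : (σ * Real.sqrt (2*π) * G ω.1) * (σ * Real.sqrt (2*π) * G ω.2)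
      = (2*π*σ^2) * (G ω.1 * G ω.2) := by
    have h5 : Real.sqrt (2*π) * Real.sqrt (2*π) = 2*π :=
      Real.mul_self_sqrt (by positivity)
    rw [show (σ * Real.sqrt (2*π) * G ω.1) * (σ * Real.sqrt (2*π) * G ω.2)
      = (Real.sqrt (2*π) * Real.sqrt (2*π)) * (σ^2 * (G ω.1 * G ω.2)) from by ring, h5]
    ring
  rw [hrw, ← mul_assoc, one_div, inv_mul_cancel₀ (by positivity : (2*π*σ^2) ≠ 0), one_mul]
  calc Real.exp (-(σ ^ 2 * π ^ 2))
      = Real.exp (-(σ^2*ω.1^2/2)) * Real.exp (-(σ^2*ω.2^2/2)) *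
          Real.exp (-(σ^2*(π^2 - ω.1^2/2 - ω.2^2/2))) := by
        rw [← Real.exp_add, ← Real.exp_add]; congr 1; ring
    _ ≤ Real.exp (-(σ^2*ω.1^2/2)) * Real.exp (-(σ^2*ω.2^2/2)) * 1 := by
        refine mul_le_mul_of_nonneg_left ?_ (by positivity)
        rw [Real.exp_le_one_iff]
        nlinarith
    _ = Real.exp (-(σ^2*ω.1^2/2)) * Real.exp (-(σ^2*ω.2^2/2)) := mul_one _
    _ ≤ G ω.1 * G ω.2 := by
        exact mul_le_mul (hGlb ω.1) (hGlb ω.2) (Real.exp_pos _).le (hGpos ω.1).le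
end
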